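/- arXiv:1707.05447 — 9 statements merged into one kernel-verified Lean document; each statement's English description precedes it below -/
import Mathlib

section
/- Let C be a monoidal category and B an object carrying a bimonad datum: a monoid structure (m, η) and a comonoid structure (Δ, ε) such that ε∘m = ε⊗ε, Δ∘η = η⊗η and ε∘η = id_𝟙. Let F be an object of C, ψ : B⊗F → F⊗B a monad distributive law (ψ∘(m⊗id_F) = (id_F⊗m)∘(ψ⊗id_B)∘(id_B⊗ψ), ψ∘(η⊗id_F) = id_F⊗η) and φ : F⊗B → B⊗F a comonad distributive law ((id_B⊗φ)∘(φ⊗id_B)∘(id_F⊗Δ) = (Δ⊗id_F)∘φ, (ε⊗id_F)∘φ = id_F⊗ε). Then ν := (id_F⊗ε)∘ψ makes F a left B-module and ϱ := φ∘(id_F⊗η) makes F a left B-comodule. (In particular, in any biwreath F over a bimonad B, the 1-cell F is a left B-module and a left B-comodule.) -/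
open CategoryTheory MonoidalCategory

/-- A bimonad datum on an object `B` of a monoidal category: a monoid structure `(m, η)`,
a comonoid structure `(Δ, ε)`, and the compatibilities `ε∘m = ε⊗ε`, `Δ∘η = η⊗η`,
`ε∘η = id`. -/
def BimonadDatum {C : Type*} [Category C] [MonoidalCategory C] (B : C)
    (m : B ⊗ B ⟶ B) (η : 𝟙_ C ⟶ B) (Δ : B ⟶ B ⊗ B) (ε : B ⟶ 𝟙_ C) : Prop :=
  (m ▷ B) ≫ m = (α_ B B B).hom ≫ (B ◁ m) ≫ m ∧
  (λ_ B).inv ≫ (η ▷ B) ≫ m = 𝟙 B ∧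
  (ρ_ B).inv ≫ (B ◁ η) ≫ m = 𝟙 B ∧
  Δ ≫ (Δ ▷ B) = Δ ≫ (B ◁ Δ) ≫ (α_ B B B).inv ∧
  Δ ≫ (ε ▷ B) ≫ (λ_ B).hom = 𝟙 B ∧
  Δ ≫ (B ◁ ε) ≫ (ρ_ B).hom = 𝟙 B ∧
  m ≫ ε = (ε ⊗ₘ ε) ≫ (λ_ (𝟙_ C)).hom ∧
  η ≫ Δ = (λ_ (𝟙_ C)).inv ≫ (η ⊗ₘ η) ∧
  η ≫ ε = 𝟙 (𝟙_ C)


private lemma aux_exch {C : Type*} [Category C] [MonoidalCategory C]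
    {B F G : C} (ε : B ⟶ 𝟙_ C) (ψ : B ⊗ F ⟶ G ⊗ B) :
    (B ◁ ((F ◁ ε) ≫ (ρ_ F).hom)) ≫ ψ =
      (α_ B F B).inv ≫ (ψ ▷ B) ≫ ((G ⊗ B) ◁ ε) ≫ (ρ_ (G ⊗ B)).hom := by
  calc (B ◁ ((F ◁ ε) ≫ (ρ_ F).hom)) ≫ ψ
      = ((α_ B F B).inv ≫ ((B ⊗ F) ◁ ε) ≫ (ρ_ (B ⊗ F)).hom) ≫ ψ := by monoidal
    _ = (α_ B F B).inv ≫ ((B ⊗ F) ◁ ε) ≫ (ψ ▷ 𝟙_ C) ≫ (ρ_ (G ⊗ B)).hom := by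
        simp [rightUnitor_naturality]
    _ = _ := by rw [whisker_exchange_assoc]

private lemma aux_two {C : Type*} [Category C] [MonoidalCategory C]
    {B F : C} (ε : B ⟶ 𝟙_ C) :
    ((F ⊗ B) ◁ ε) ≫ (ρ_ (F ⊗ B)).hom ≫ (F ◁ ε) ≫ (ρ_ F).hom =
      (α_ F B B).hom ≫ (F ◁ (ε ⊗ₘ ε)) ≫ (F ◁ (λ_ (𝟙_ C)).hom) ≫ (ρ_ F).hom := by
  calc ((F ⊗ B) ◁ ε) ≫ (ρ_ (F ⊗ B)).hom ≫ (F ◁ ε) ≫ (ρ_ F).hom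
      = ((F ⊗ B) ◁ ε) ≫ ((F ◁ ε) ▷ 𝟙_ C) ≫ (ρ_ (F ⊗ 𝟙_ C)).hom ≫ (ρ_ F).hom := by
        simp [rightUnitor_naturality]
    _ = ((F ◁ ε) ▷ B) ≫ ((F ⊗ 𝟙_ C) ◁ ε) ≫ (ρ_ (F ⊗ 𝟙_ C)).hom ≫ (ρ_ F).hom := by
        rw [← whisker_exchange_assoc]
    _ = _ := by simp [MonoidalCategory.tensorHom_def]

private lemma aux_exch' {C : Type*} [Category C] [MonoidalCategory C]
    {B F G : C} (η : 𝟙_ C ⟶ B) (φ : F ⊗ B ⟶ B ⊗ G) :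
    φ ≫ (B ◁ ((ρ_ G).inv ≫ (G ◁ η))) =
      (ρ_ (F ⊗ B)).inv ≫ ((F ⊗ B) ◁ η) ≫ (φ ▷ B) ≫ (α_ B G B).hom := by
  calc φ ≫ (B ◁ ((ρ_ G).inv ≫ (G ◁ η)))
      = φ ≫ (ρ_ (B ⊗ G)).inv ≫ ((B ⊗ G) ◁ η) ≫ (α_ B G B).hom := by monoidal
    _ = (ρ_ (F ⊗ B)).inv ≫ (φ ▷ 𝟙_ C) ≫ ((B ⊗ G) ◁ η) ≫ (α_ B G B).hom := by
        rw [rightUnitor_inv_naturality_assoc]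
    _ = _ := by rw [← whisker_exchange_assoc]

private lemma aux_two' {C : Type*} [Category C] [MonoidalCategory C]
    {B F : C} (η : 𝟙_ C ⟶ B) :
    (ρ_ F).inv ≫ (F ◁ η) ≫ (ρ_ (F ⊗ B)).inv ≫ ((F ⊗ B) ◁ η) =
      (ρ_ F).inv ≫ (F ◁ ((λ_ (𝟙_ C)).inv ≫ (η ⊗ₘ η))) ≫ (α_ F B B).inv := by
  calc (ρ_ F).inv ≫ (F ◁ η) ≫ (ρ_ (F ⊗ B)).inv ≫ ((F ⊗ B) ◁ η)
      = (ρ_ F).inv ≫ (ρ_ (F ⊗ 𝟙_ C)).inv ≫ ((F ◁ η) ▷ 𝟙_ C) ≫ ((F ⊗ B) ◁ η) := by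
        rw [rightUnitor_inv_naturality_assoc]
    _ = (ρ_ F).inv ≫ (ρ_ (F ⊗ 𝟙_ C)).inv ≫ ((F ⊗ 𝟙_ C) ◁ η) ≫ ((F ◁ η) ▷ B) := by
        rw [← whisker_exchange]
    _ = _ := by rw [tensorHom_def']; monoidal

/-- For a bimonad datum on `B`, a monad distributive law
`ψ : B ⊗ F ⟶ F ⊗ B` and a comonad distributive law `φ : F ⊗ B ⟶ B ⊗ F`, the morphisms
`ν := (id_F ⊗ ε) ∘ ψ` and `ϱ := φ ∘ (id_F ⊗ η)` make `F` a left `B`-module and a left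
`B`-comodule, respectively.  (In particular this holds in any biwreath.) -/
theorem statement2 {C : Type*} [Category C] [MonoidalCategory C]
    (B F : C) (m : B ⊗ B ⟶ B) (η : 𝟙_ C ⟶ B) (Δ : B ⟶ B ⊗ B) (ε : B ⟶ 𝟙_ C)
    (hB : BimonadDatum B m η Δ ε)
    (ψ : B ⊗ F ⟶ F ⊗ B) (φ : F ⊗ B ⟶ B ⊗ F)
    (hψm : (m ▷ F) ≫ ψ =
      (α_ B B F).hom ≫ (B ◁ ψ) ≫ (α_ B F B).inv ≫ (ψ ▷ B) ≫
        (α_ F B B).hom ≫ (F ◁ m))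
    (hψη : (η ▷ F) ≫ ψ = (λ_ F).hom ≫ (ρ_ F).inv ≫ (F ◁ η))
    (hφΔ : (F ◁ Δ) ≫ (α_ F B B).inv ≫ (φ ▷ B) ≫ (α_ B F B).hom ≫ (B ◁ φ) ≫
        (α_ B B F).inv = φ ≫ (Δ ▷ F))
    (hφε : φ ≫ (ε ▷ F) ≫ (λ_ F).hom = (F ◁ ε) ≫ (ρ_ F).hom) :
    (∀ ν : B ⊗ F ⟶ F, ν = ψ ≫ (F ◁ ε) ≫ (ρ_ F).hom →
      ((m ▷ F) ≫ ν = (α_ B B F).hom ≫ (B ◁ ν) ≫ ν ∧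
       (η ▷ F) ≫ ν = (λ_ F).hom)) ∧
    (∀ ϱ : F ⟶ B ⊗ F, ϱ = (ρ_ F).inv ≫ (F ◁ η) ≫ φ →
      (ϱ ≫ (Δ ▷ F) = ϱ ≫ (B ◁ ϱ) ≫ (α_ B B F).inv ∧
       ϱ ≫ (ε ▷ F) ≫ (λ_ F).hom = 𝟙 F)) := by
  obtain ⟨-, -, -, -, -, -, hεm, hηΔ, hηε⟩ := hB
  constructor
  · intro ν hν
    subst hν
    constructor
    · have hcomp : B ◁ (ψ ≫ (F ◁ ε) ≫ (ρ_ F).hom) =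
          (B ◁ ψ) ≫ (B ◁ ((F ◁ ε) ≫ (ρ_ F).hom)) := MonoidalCategory.whiskerLeft_comp _ _ _
      rw [reassoc_of% hψm, hcomp]
      conv_rhs => rw [Category.assoc, reassoc_of% (aux_exch ε ψ)]
      rw [← MonoidalCategory.whiskerLeft_comp_assoc F m ε, hεm]
      simp only [MonoidalCategory.whiskerLeft_comp, Category.assoc]
      rw [aux_two]
    · rw [reassoc_of% hψη]
      rw [← MonoidalCategory.whiskerLeft_comp_assoc F η ε, hηε]
      simp
  · intro ϱ hϱ
    subst hϱ
    constructor
    · have hcomp : B ◁ ((ρ_ F).inv ≫ (F ◁ η) ≫ φ) =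
          (B ◁ ((ρ_ F).inv ≫ (F ◁ η))) ≫ (B ◁ φ) := by
        rw [← MonoidalCategory.whiskerLeft_comp]; simp
      simp only [Category.assoc]
      rw [← hφΔ, hcomp]
      simp only [Category.assoc]
      rw [reassoc_of% (aux_exch' η φ)]
      rw [← MonoidalCategory.whiskerLeft_comp_assoc F η Δ, hηΔ,
        reassoc_of% (aux_two' η)]
    · simp only [Category.assoc]
      rw [hφε, ← MonoidalCategory.whiskerLeft_comp_assoc F η ε, hηε]
      simp
end

section
/- Let B be a bialgebra in a braided monoidal category C with braiding c, and define λ_B := (m⊗id_B)∘(id_B⊗c_{B,B})∘(Δ⊗id_B) : B⊗B → B⊗B. Then: (i) λ_B∘(m⊗id_B) = (id_B⊗m)∘(λ_B⊗id_B)∘(id_B⊗λ_B); (ii) λ_B∘(η⊗id_B) = id_B⊗η; (iii) (id_B⊗λ_B)∘(λ_B⊗id_B)∘(id_B⊗Δ) = (Δ⊗id_B)∘λ_B; (iv) (ε⊗id_B)∘λ_B = id_B⊗ε; and (v) Δ∘m = (id_B⊗m)∘(λ_B⊗id_B)∘(id_B⊗Δ). Consequently every bialgebra in C, equipped with λ_B,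 is a bimonad in the one-object 2-category Ĉ determined by C. -/
set_option maxHeartbeats 1600000

open CategoryTheory MonoidalCategory

/-- The middle interchange `(X₁ ⊗ X₂) ⊗ (Y₁ ⊗ Y₂) ⟶ (X₁ ⊗ Y₁) ⊗ (X₂ ⊗ Y₂)`
given by `id ⊗ c ⊗ id` (with the braiding on the two middle factors). -/
def exch {C : Type*} [Category C] [MonoidalCategory C] [BraidedCategory C]
    (X Y Z W : C) : (X ⊗ Y) ⊗ (Z ⊗ W) ⟶ (X ⊗ Z) ⊗ (Y ⊗ W) :=
  (α_ X Y (Z ⊗ W)).hom ≫ (X ◁ (α_ Y Z W).inv) ≫ (X ◁ ((β_ Y Z).hom ▷ W)) ≫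
    (X ◁ (α_ Z Y W).hom) ≫ (α_ X Z (Y ⊗ W)).inv

/-- A bialgebra in a braided monoidal category: a monoid structure `(m, η)`, a comonoid
structure `(Δ, ε)`, and the braided bialgebra compatibilities. -/
def IsBialgebraIn {C : Type*} [Category C] [MonoidalCategory C] [BraidedCategory C]
    (X : C) (m : X ⊗ X ⟶ X) (η : 𝟙_ C ⟶ X) (Δ : X ⟶ X ⊗ X) (ε : X ⟶ 𝟙_ C) : Prop :=
  (m ▷ X) ≫ m = (α_ X X X).hom ≫ (X ◁ m) ≫ m ∧
  (λ_ X).inv ≫ (η ▷ X) ≫ m = 𝟙 X ∧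
  (ρ_ X).inv ≫ (X ◁ η) ≫ m = 𝟙 X ∧
  Δ ≫ (Δ ▷ X) = Δ ≫ (X ◁ Δ) ≫ (α_ X X X).inv ∧
  Δ ≫ (ε ▷ X) ≫ (λ_ X).hom = 𝟙 X ∧
  Δ ≫ (X ◁ ε) ≫ (ρ_ X).hom = 𝟙 X ∧
  m ≫ Δ = (Δ ⊗ₘ Δ) ≫ exch X X X X ≫ (m ⊗ₘ m) ∧
  m ≫ ε = (ε ⊗ₘ ε) ≫ (λ_ (𝟙_ C)).hom ∧
  η ≫ Δ = (λ_ (𝟙_ C)).inv ≫ (η ⊗ₘ η) ∧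
  η ≫ ε = 𝟙 (𝟙_ C)

section Aux

open BraidedCategory

variable {C : Type*} [Category C] [MonoidalCategory C] [BraidedCategory C]
variable (B : C)

theorem statement3_law1 (m : B ⊗ B ⟶ B) (Δ : B ⟶ B ⊗ B)
    (hassoc : (m ▷ B) ≫ m = (α_ B B B).hom ≫ (B ◁ m) ≫ m)
    (hmΔ : m ≫ Δ = (Δ ⊗ₘ Δ) ≫ tensorμ B B B B ≫ (m ⊗ₘ m)) :
    (m ▷ B) ≫ ((Δ ▷ B) ≫ (α_ B B B).hom ≫ (B ◁ (β_ B B).hom) ≫ (α_ B B B).inv ≫ (m ▷ B)) =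
      (α_ B B B).hom ≫
        (B ◁ ((Δ ▷ B) ≫ (α_ B B B).hom ≫ (B ◁ (β_ B B).hom) ≫ (α_ B B B).inv ≫ (m ▷ B))) ≫
        (α_ B B B).inv ≫
        (((Δ ▷ B) ≫ (α_ B B B).hom ≫ (B ◁ (β_ B B).hom) ≫ (α_ B B B).inv ≫ (m ▷ B)) ▷ B) ≫
        (α_ B B B).hom ≫ (B ◁ m) := by
  have h1 : (m ▷ B) ≫ ((Δ ▷ B) ≫ (α_ B B B).hom ≫ (B ◁ (β_ B B).hom) ≫ (α_ B B B).inv ≫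
      (m ▷ B)) =
      𝟙 ((B ⊗ B) ⊗ B) ⊗≫ (Δ ▷ B ▷ B) ⊗≫ (B ◁ B ◁ (Δ ▷ B)) ⊗≫
        (B ◁ ((B ⊗ B) ◁ (β_ B B).hom ≫ (β_ B B).hom ▷ (B ⊗ B))) ⊗≫
        (B ◁ B ◁ ((β_ B B).hom ▷ B)) ⊗≫ (B ◁ (m ▷ (B ⊗ B))) ⊗≫ (m ▷ (B ⊗ B)) ⊗≫
        (B ◁ m) ⊗≫ 𝟙 (B ⊗ B) := by
    slice_lhs 1 2 => rw [← comp_whiskerRight, hmΔ]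
    rw [tensorHom_def Δ Δ, tensorHom_def' m m, tensorμ]
    calc
      _ = 𝟙 ((B ⊗ B) ⊗ B) ⊗≫ (Δ ▷ B ▷ B) ⊗≫ (B ◁ B ◁ (Δ ▷ B)) ⊗≫
          (B ◁ ((β_ B B).hom ▷ (B ⊗ B))) ⊗≫ (B ◁ B ◁ (m ▷ B)) ⊗≫
          (m ▷ (B ⊗ B) ≫ B ◁ (β_ B B).hom) ⊗≫ (m ▷ B) ⊗≫ 𝟙 (B ⊗ B) := by
        monoidal
      _ = 𝟙 ((B ⊗ B) ⊗ B) ⊗≫ (Δ ▷ B ▷ B) ⊗≫ (B ◁ B ◁ (Δ ▷ B)) ⊗≫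
          (B ◁ ((β_ B B).hom ▷ (B ⊗ B))) ⊗≫
          ((B ⊗ B) ◁ (m ▷ B ≫ (β_ B B).hom)) ⊗≫ (m ▷ (B ⊗ B)) ⊗≫ (m ▷ B) ⊗≫
          𝟙 (B ⊗ B) := by
        rw [← whisker_exchange]; monoidal
      _ = 𝟙 ((B ⊗ B) ⊗ B) ⊗≫ (Δ ▷ B ▷ B) ⊗≫ (B ◁ B ◁ (Δ ▷ B)) ⊗≫
          (B ◁ ((β_ B B).hom ▷ (B ⊗ B))) ⊗≫ ((B ⊗ B) ◁ (β_ (B ⊗ B) B).hom) ⊗≫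
          ((B ⊗ B) ◁ (B ◁ m) ≫ m ▷ (B ⊗ B)) ⊗≫ (m ▷ B) ⊗≫ 𝟙 (B ⊗ B) := by
        rw [braiding_naturality_left]; monoidal
      _ = 𝟙 ((B ⊗ B) ⊗ B) ⊗≫ (Δ ▷ B ▷ B) ⊗≫ (B ◁ B ◁ (Δ ▷ B)) ⊗≫
          (B ◁ ((β_ B B).hom ▷ (B ⊗ B))) ⊗≫ ((B ⊗ B) ◁ (β_ (B ⊗ B) B).hom) ⊗≫
          (m ▷ (B ⊗ B ⊗ B)) ⊗≫ ((B ⊗ B) ◁ m ≫ m ▷ B) ⊗≫ 𝟙 (B ⊗ B) := by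
        rw [whisker_exchange]; monoidal
      _ = 𝟙 ((B ⊗ B) ⊗ B) ⊗≫ (Δ ▷ B ▷ B) ⊗≫ (B ◁ B ◁ (Δ ▷ B)) ⊗≫
          (B ◁ ((β_ B B).hom ▷ (B ⊗ B))) ⊗≫ ((B ⊗ B) ◁ (β_ (B ⊗ B) B).hom) ⊗≫
          ((m ▷ B ≫ m) ▷ (B ⊗ B)) ⊗≫ (B ◁ m) ⊗≫ 𝟙 (B ⊗ B) := by
        rw [whisker_exchange]; monoidal
      _ = 𝟙 ((B ⊗ B) ⊗ B) ⊗≫ (Δ ▷ B ▷ B) ⊗≫ (B ◁ B ◁ (Δ ▷ B)) ⊗≫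
          (B ◁ ((β_ B B).hom ▷ (B ⊗ B) ≫ (B ⊗ B) ◁ (β_ B B).hom)) ⊗≫
          (B ◁ B ◁ ((β_ B B).hom ▷ B)) ⊗≫ (B ◁ (m ▷ (B ⊗ B))) ⊗≫ (m ▷ (B ⊗ B)) ⊗≫
          (B ◁ m) ⊗≫ 𝟙 (B ⊗ B) := by
        rw [hassoc, braiding_tensor_left_hom]; monoidal
      _ = _ := by rw [whisker_exchange]
  have h2 : (α_ B B B).hom ≫
        (B ◁ ((Δ ▷ B) ≫ (α_ B B B).hom ≫ (B ◁ (β_ B B).hom) ≫ (α_ B B B).inv ≫ (m ▷ B))) ≫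
        (α_ B B B).inv ≫
        (((Δ ▷ B) ≫ (α_ B B B).hom ≫ (B ◁ (β_ B B).hom) ≫ (α_ B B B).inv ≫ (m ▷ B)) ▷ B) ≫
        (α_ B B B).hom ≫ (B ◁ m) =
      𝟙 ((B ⊗ B) ⊗ B) ⊗≫ (Δ ▷ B ▷ B) ⊗≫ (B ◁ B ◁ (Δ ▷ B)) ⊗≫
        (B ◁ ((B ⊗ B) ◁ (β_ B B).hom ≫ (β_ B B).hom ▷ (B ⊗ B))) ⊗≫
        (B ◁ B ◁ ((β_ B B).hom ▷ B)) ⊗≫ (B ◁ (m ▷ (B ⊗ B))) ⊗≫ (m ▷ (B ⊗ B)) ⊗≫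
        (B ◁ m) ⊗≫ 𝟙 (B ⊗ B) := by
    calc
      _ = 𝟙 ((B ⊗ B) ⊗ B) ⊗≫
          (B ◁ ((Δ ▷ B) ≫ (α_ B B B).hom ≫ (B ◁ (β_ B B).hom) ≫ (α_ B B B).inv ≫ (m ▷ B)) ≫
            Δ ▷ (B ⊗ B)) ⊗≫
          ((B ◁ (β_ B B).hom) ▷ B) ⊗≫ ((m ▷ B) ▷ B) ⊗≫ (B ◁ m) ⊗≫ 𝟙 (B ⊗ B) := by
        monoidal
      _ = 𝟙 ((B ⊗ B) ⊗ B) ⊗≫ (Δ ▷ B ▷ B) ⊗≫ (B ◁ B ◁ (Δ ▷ B)) ⊗≫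
          (B ◁ B ◁ B ◁ (β_ B B).hom) ⊗≫
          (B ◁ ((B ◁ m ≫ (β_ B B).hom) ▷ B)) ⊗≫ (m ▷ (B ⊗ B)) ⊗≫ (B ◁ m) ⊗≫
          𝟙 (B ⊗ B) := by
        rw [whisker_exchange]; monoidal
      _ = _ := by rw [braiding_naturality_right, braiding_tensor_right_hom]; monoidal
  rw [h1, h2]

theorem statement3_law3 (m : B ⊗ B ⟶ B) (Δ : B ⟶ B ⊗ B)
    (hcoassoc : Δ ≫ (Δ ▷ B) = Δ ≫ (B ◁ Δ) ≫ (α_ B B B).inv)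
    (hmΔ : m ≫ Δ = (Δ ⊗ₘ Δ) ≫ tensorμ B B B B ≫ (m ⊗ₘ m)) :
    (B ◁ Δ) ≫ (α_ B B B).inv ≫
      (((Δ ▷ B) ≫ (α_ B B B).hom ≫ (B ◁ (β_ B B).hom) ≫ (α_ B B B).inv ≫ (m ▷ B)) ▷ B) ≫
      (α_ B B B).hom ≫
      (B ◁ ((Δ ▷ B) ≫ (α_ B B B).hom ≫ (B ◁ (β_ B B).hom) ≫ (α_ B B B).inv ≫ (m ▷ B))) =
      ((Δ ▷ B) ≫ (α_ B B B).hom ≫ (B ◁ (β_ B B).hom) ≫ (α_ B B B).inv ≫ (m ▷ B)) ≫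
        (Δ ▷ B) ≫ (α_ B B B).hom := by
  have h1 : (B ◁ Δ) ≫ (α_ B B B).inv ≫
      (((Δ ▷ B) ≫ (α_ B B B).hom ≫ (B ◁ (β_ B B).hom) ≫ (α_ B B B).inv ≫ (m ▷ B)) ▷ B) ≫
      (α_ B B B).hom ≫
      (B ◁ ((Δ ▷ B) ≫ (α_ B B B).hom ≫ (B ◁ (β_ B B).hom) ≫ (α_ B B B).inv ≫ (m ▷ B))) =
      𝟙 (B ⊗ B) ⊗≫ (B ◁ Δ) ⊗≫ ((Δ ≫ B ◁ Δ ≫ (α_ B B B).inv) ▷ (B ⊗ B)) ⊗≫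
        (B ◁ B ◁ ((β_ B B).hom ▷ B)) ⊗≫ (B ◁ ((β_ B B).hom ▷ (B ⊗ B))) ⊗≫
        ((B ⊗ B) ◁ (B ◁ (β_ B B).hom)) ⊗≫ (m ▷ (B ⊗ B ⊗ B)) ⊗≫ (B ◁ (m ▷ B)) ⊗≫
        𝟙 (B ⊗ B ⊗ B) := by
    calc
      _ = 𝟙 (B ⊗ B) ⊗≫ (B ◁ Δ) ⊗≫ (Δ ▷ (B ⊗ B)) ⊗≫ (B ◁ ((β_ B B).hom ▷ B)) ⊗≫
          (m ▷ (B ⊗ B) ≫ B ◁ (Δ ▷ B)) ⊗≫ (B ◁ (B ◁ (β_ B B).hom)) ⊗≫ (B ◁ (m ▷ B)) ⊗≫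
          𝟙 (B ⊗ B ⊗ B) := by monoidal
      _ = 𝟙 (B ⊗ B) ⊗≫ (B ◁ Δ) ⊗≫ (Δ ▷ (B ⊗ B)) ⊗≫
          (B ◁ (((β_ B B).hom ≫ B ◁ Δ) ▷ B)) ⊗≫ (m ▷ (B ⊗ B ⊗ B)) ⊗≫
          (B ◁ (B ◁ (β_ B B).hom)) ⊗≫ (B ◁ (m ▷ B)) ⊗≫ 𝟙 (B ⊗ B ⊗ B) := by
        rw [← whisker_exchange]; monoidal
      _ = 𝟙 (B ⊗ B) ⊗≫ (B ◁ Δ) ⊗≫ (Δ ▷ (B ⊗ B)) ⊗≫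
          (B ◁ ((Δ ▷ B ≫ (β_ (B ⊗ B) B).hom) ▷ B)) ⊗≫ (m ▷ (B ⊗ B ⊗ B)) ⊗≫
          (B ◁ (B ◁ (β_ B B).hom)) ⊗≫ (B ◁ (m ▷ B)) ⊗≫ 𝟙 (B ⊗ B ⊗ B) := by
        rw [← braiding_naturality_left]
      _ = 𝟙 (B ⊗ B) ⊗≫ (B ◁ Δ) ⊗≫ ((Δ ≫ B ◁ Δ ≫ (α_ B B B).inv) ▷ (B ⊗ B)) ⊗≫
          (B ◁ B ◁ ((β_ B B).hom ▷ B)) ⊗≫ (B ◁ ((β_ B B).hom ▷ (B ⊗ B))) ⊗≫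
          (m ▷ (B ⊗ B ⊗ B) ≫ B ◁ (B ◁ (β_ B B).hom)) ⊗≫ (B ◁ (m ▷ B)) ⊗≫
          𝟙 (B ⊗ B ⊗ B) := by
        rw [braiding_tensor_left_hom]; monoidal
      _ = _ := by rw [← whisker_exchange]; monoidal
  have h2 : ((Δ ▷ B) ≫ (α_ B B B).hom ≫ (B ◁ (β_ B B).hom) ≫ (α_ B B B).inv ≫ (m ▷ B)) ≫
        (Δ ▷ B) ≫ (α_ B B B).hom =
      𝟙 (B ⊗ B) ⊗≫ (B ◁ Δ) ⊗≫ ((Δ ≫ B ◁ Δ ≫ (α_ B B B).inv) ▷ (B ⊗ B)) ⊗≫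
        (B ◁ B ◁ ((β_ B B).hom ▷ B)) ⊗≫ (B ◁ ((β_ B B).hom ▷ (B ⊗ B))) ⊗≫
        ((B ⊗ B) ◁ (B ◁ (β_ B B).hom)) ⊗≫ (m ▷ (B ⊗ B ⊗ B)) ⊗≫ (B ◁ (m ▷ B)) ⊗≫
        𝟙 (B ⊗ B ⊗ B) := by
    simp only [Category.assoc]
    slice_lhs 5 6 => rw [← comp_whiskerRight, hmΔ]
    rw [tensorHom_def Δ Δ, tensorHom_def' m m, tensorμ]
    calc
      _ = 𝟙 (B ⊗ B) ⊗≫ (Δ ▷ B) ⊗≫ (B ◁ (β_ B B).hom ≫ Δ ▷ (B ⊗ B)) ⊗≫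
          (B ◁ B ◁ (Δ ▷ B)) ⊗≫ (B ◁ ((β_ B B).hom ▷ (B ⊗ B))) ⊗≫
          (B ◁ B ◁ (m ▷ B)) ⊗≫ (m ▷ (B ⊗ B)) ⊗≫ 𝟙 (B ⊗ B ⊗ B) := by monoidal
      _ = 𝟙 (B ⊗ B) ⊗≫ ((Δ ≫ Δ ▷ B) ▷ B) ⊗≫ (B ◁ B ◁ ((β_ B B).hom ≫ Δ ▷ B)) ⊗≫
          (B ◁ ((β_ B B).hom ▷ (B ⊗ B))) ⊗≫ (B ◁ B ◁ (m ▷ B)) ⊗≫ (m ▷ (B ⊗ B)) ⊗≫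
          𝟙 (B ⊗ B ⊗ B) := by
        rw [whisker_exchange]; monoidal
      _ = 𝟙 (B ⊗ B) ⊗≫ (((Δ ≫ B ◁ Δ ≫ (α_ B B B).inv) ▷ B) ≫ (((B ⊗ B) ⊗ B) ◁ Δ)) ⊗≫
          (B ◁ B ◁ (β_ B (B ⊗ B)).hom) ⊗≫ (B ◁ ((β_ B B).hom ▷ (B ⊗ B))) ⊗≫
          (B ◁ B ◁ (m ▷ B)) ⊗≫ (m ▷ (B ⊗ B)) ⊗≫ 𝟙 (B ⊗ B ⊗ B) := by
        rw [hcoassoc, ← braiding_naturality_right]; monoidal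
      _ = 𝟙 (B ⊗ B) ⊗≫ (B ◁ Δ) ⊗≫ ((Δ ≫ B ◁ Δ ≫ (α_ B B B).inv) ▷ (B ⊗ B)) ⊗≫
          (B ◁ B ◁ ((β_ B B).hom ▷ B)) ⊗≫
          (B ◁ ((B ⊗ B) ◁ (β_ B B).hom ≫ (β_ B B).hom ▷ (B ⊗ B))) ⊗≫
          (B ◁ B ◁ (m ▷ B)) ⊗≫ (m ▷ (B ⊗ B)) ⊗≫ 𝟙 (B ⊗ B ⊗ B) := by
        rw [← whisker_exchange, braiding_tensor_right_hom]; monoidal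
      _ = 𝟙 (B ⊗ B) ⊗≫ (B ◁ Δ) ⊗≫ ((Δ ≫ B ◁ Δ ≫ (α_ B B B).inv) ▷ (B ⊗ B)) ⊗≫
          (B ◁ B ◁ ((β_ B B).hom ▷ B)) ⊗≫ (B ◁ ((β_ B B).hom ▷ (B ⊗ B))) ⊗≫
          ((B ⊗ B) ◁ (B ◁ (β_ B B).hom)) ⊗≫
          ((B ⊗ B) ◁ (m ▷ B) ≫ m ▷ (B ⊗ B)) ⊗≫ 𝟙 (B ⊗ B ⊗ B) := by
        rw [whisker_exchange]; monoidal
      _ = _ := by rw [whisker_exchange]; monoidal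
  rw [h1, h2]

theorem statement3_law5 (m : B ⊗ B ⟶ B) (Δ : B ⟶ B ⊗ B) :
    (B ◁ Δ) ≫ (α_ B B B).inv ≫
      (((Δ ▷ B) ≫ (α_ B B B).hom ≫ (B ◁ (β_ B B).hom) ≫ (α_ B B B).inv ≫ (m ▷ B)) ▷ B) ≫
      (α_ B B B).hom ≫ (B ◁ m) =
    (Δ ⊗ₘ Δ) ≫ tensorμ B B B B ≫ (m ⊗ₘ m) := by
  rw [MonoidalCategory.tensorHom_def, tensorHom_def m m, tensorμ]
  simp only [comp_whiskerRight, Category.assoc, whisker_assoc]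
  slice_lhs 1 3 => rw [← associator_inv_naturality_left, whisker_exchange_assoc]
  simp only [Category.assoc]
  coherence

end Aux

/-- For a bialgebra `B` in a braided monoidal category, the morphism
`λ_B := (m ⊗ id) ∘ (id ⊗ c_{B,B}) ∘ (Δ ⊗ id)` satisfies the four distributive-law
identities and the bimonad compatibility `Δ ∘ m = (id ⊗ m) ∘ (λ_B ⊗ id) ∘ (id ⊗ Δ)`;
hence every bialgebra in `C`, equipped with `λ_B`, is a bimonad in the one-object
2-category determined by `C`. -/
theorem statement3 {C : Type*} [Category C] [MonoidalCategory C] [BraidedCategory C]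
    (B : C) (m : B ⊗ B ⟶ B) (η : 𝟙_ C ⟶ B) (Δ : B ⟶ B ⊗ B) (ε : B ⟶ 𝟙_ C)
    (hB : IsBialgebraIn B m η Δ ε) :
    ∀ lB : B ⊗ B ⟶ B ⊗ B,
      lB = (Δ ▷ B) ≫ (α_ B B B).hom ≫ (B ◁ (β_ B B).hom) ≫ (α_ B B B).inv ≫ (m ▷ B) →
      ((m ▷ B) ≫ lB =
          (α_ B B B).hom ≫ (B ◁ lB) ≫ (α_ B B B).inv ≫ (lB ▷ B) ≫
            (α_ B B B).hom ≫ (B ◁ m) ∧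
       (λ_ B).inv ≫ (η ▷ B) ≫ lB = (ρ_ B).inv ≫ (B ◁ η) ∧
       (B ◁ Δ) ≫ (α_ B B B).inv ≫ (lB ▷ B) ≫ (α_ B B B).hom ≫ (B ◁ lB) =
          lB ≫ (Δ ▷ B) ≫ (α_ B B B).hom ∧
       lB ≫ (ε ▷ B) ≫ (λ_ B).hom = (B ◁ ε) ≫ (ρ_ B).hom ∧
       m ≫ Δ = (B ◁ Δ) ≫ (α_ B B B).inv ≫ (lB ▷ B) ≫ (α_ B B B).hom ≫ (B ◁ m)) := by
  obtain ⟨hassoc, hηl, hηr, hcoassoc, hεl, hεr, hmΔ, hmε, hηΔ, hηε⟩ := hB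
  have hmΔ' : m ≫ Δ = (Δ ⊗ₘ Δ) ≫ tensorμ B B B B ≫ (m ⊗ₘ m) := hmΔ
  intro lB hlB
  subst hlB
  refine ⟨statement3_law1 B m Δ hassoc hmΔ', ?_, statement3_law3 B m Δ hcoassoc hmΔ', ?_, ?_⟩
  · -- (ii) left unit law for the distributive law
    slice_lhs 2 3 => rw [← comp_whiskerRight, hηΔ]
    rw [MonoidalCategory.tensorHom_def]
    simp only [comp_whiskerRight, Category.assoc, whisker_assoc, Iso.inv_hom_id_assoc]
    slice_lhs 5 6 =>
      rw [← MonoidalCategory.whiskerLeft_comp, BraidedCategory.braiding_naturality_left,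
        MonoidalCategory.whiskerLeft_comp]
    slice_lhs 6 7 => rw [associator_inv_naturality_right]
    slice_lhs 7 8 => rw [whisker_exchange]
    have h : (ρ_ B).inv = (ρ_ B).inv ≫ ((λ_ B).inv ≫ η ▷ B ≫ m) ▷ 𝟙_ C := by
      rw [hηl]; simp
    conv_rhs => rw [h]
    simp only [comp_whiskerRight, Category.assoc, braiding_tensorUnit_left,
      MonoidalCategory.whiskerLeft_comp]
    coherence
  · -- (iv) counit law for the distributive law
    have hΔε : Δ ≫ (ε ▷ B) = (λ_ B).inv := by
      rw [← cancel_mono (λ_ B).hom]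
      simp only [Category.assoc, hεl, Iso.inv_hom_id]
    simp only [Category.assoc]
    slice_lhs 5 6 => rw [← comp_whiskerRight, hmε]
    rw [MonoidalCategory.tensorHom_def]
    simp only [comp_whiskerRight, Category.assoc]
    slice_lhs 4 5 => rw [← associator_inv_naturality_left]
    slice_lhs 3 4 => rw [whisker_exchange]
    slice_lhs 2 3 => rw [← associator_naturality_left]
    slice_lhs 1 2 => rw [← comp_whiskerRight, hΔε]
    slice_lhs 4 5 => rw [← associator_inv_naturality_middle]
    slice_lhs 3 4 =>
      rw [← MonoidalCategory.whiskerLeft_comp, ← BraidedCategory.braiding_naturality_right,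
        MonoidalCategory.whiskerLeft_comp]
    simp only [braiding_tensorUnit_right, Category.assoc,
      MonoidalCategory.whiskerLeft_comp]
    coherence
  · -- (v) compatibility of multiplication and comultiplication
    rw [hmΔ', statement3_law5 B m Δ]
end

section
/- Let C be a monoidal category, B an object with a bimonad datum (monoid (m,η), comonoid (Δ,ε), ε∘m = ε⊗ε, Δ∘η = η⊗η, ε∘η = id_𝟙), F an object, and ψ : B⊗F → F⊗B a morphism with ψ∘(η⊗id_F) = id_F⊗η. (1) Suppose η_M : 𝟙 → F⊗B satisfies the 2-cell condition (id_F⊗m)∘(η_M⊗id_B) = (id_F⊗m)∘(ψ⊗id_B)∘(id_B⊗η_M) and is canonical, η_M = η̃⊗η for some η̃ : 𝟙 → F. Then ψ∘(id_B⊗η̃) = η̃⊗id_B (the induced left F-coaction on B is trivial); if moreover Δ_M : F → F⊗F⊗B satisfies (id_F⊗id_F⊗m)∘(Δ_M⊗id_B)∘η_M = (id_F⊗id_F⊗m)∘(id_F⊗ψ⊗id_B)∘(η_M⊗η_M), then Φ_λ := Δ_M∘η̃ = η̃⊗η̃⊗η (the 3-cocycle Φ_λ is trivial). (2) Suppose ε_M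 : F → B satisfies the 2-cell condition m∘(ε_M⊗id_B)∘ψ = m∘(id_B⊗ε_M) and is canonical, ε_M = η∘ε̃ for some ε̃ : F → 𝟙. Then (ε̃⊗id_B)∘ψ = id_B⊗ε̃ (the induced right F-action on B is trivial); if moreover μ_M : F⊗F → F⊗B satisfies m∘(ε_M⊗ε_M) = m∘(ε_M⊗id_B)∘μ_M, then σ := (ε̃⊗id_B)∘μ_M = η∘(ε̃⊗ε̃) (the 2-cocycle σ is trivial). -/
open CategoryTheory MonoidalCategory

/-- Triviality of the structures induced by canonical 2-cells:
(1) if `η_M` is a canonical 2-cell then the induced left `F`-coaction on `B` is trivial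
and, in presence of the `Δ_M`–`η_M` compatibility, the 3-cocycle `Φ_λ` is trivial;
(2) if `ε_M` is canonical then the induced right `F`-action on `B` is trivial and, in
presence of the `ε_M`–`μ_M` compatibility, the 2-cocycle `σ` is trivial. -/
theorem statement4 {C : Type*} [Category C] [MonoidalCategory C]
    (B F : C) (m : B ⊗ B ⟶ B) (η : 𝟙_ C ⟶ B) (Δ : B ⟶ B ⊗ B) (ε : B ⟶ 𝟙_ C)
    (hB : BimonadDatum B m η Δ ε)
    (ψ : B ⊗ F ⟶ F ⊗ B)
    (hψη : (η ▷ F) ≫ ψ = (λ_ F).hom ≫ (ρ_ F).inv ≫ (F ◁ η)) :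
    (∀ ηM : 𝟙_ C ⟶ F ⊗ B, ∀ ηt : 𝟙_ C ⟶ F,
      ((λ_ B).inv ≫ (ηM ▷ B) ≫ (α_ F B B).hom ≫ (F ◁ m) =
        (ρ_ B).inv ≫ (B ◁ ηM) ≫ (α_ B F B).inv ≫ (ψ ▷ B) ≫
          (α_ F B B).hom ≫ (F ◁ m)) →
      ηM = ηt ≫ (ρ_ F).inv ≫ (F ◁ η) →
      (((ρ_ B).inv ≫ (B ◁ ηt) ≫ ψ = (λ_ B).inv ≫ (ηt ▷ B)) ∧
       (∀ ΔM : F ⟶ (F ⊗ F) ⊗ B,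
          (ηM ≫ (ΔM ▷ B) ≫ (α_ (F ⊗ F) B B).hom ≫ ((F ⊗ F) ◁ m) =
            (λ_ (𝟙_ C)).inv ≫ (ηM ⊗ₘ ηM) ≫ (α_ F B (F ⊗ B)).hom ≫
              (F ◁ (α_ B F B).inv) ≫ (F ◁ (ψ ▷ B)) ≫ (F ◁ (α_ F B B).hom) ≫
              (F ◁ (F ◁ m)) ≫ (α_ F F B).inv) →
          ηt ≫ ΔM =
            ((λ_ (𝟙_ C)).inv ≫ (ηt ⊗ₘ ηt)) ≫ (ρ_ (F ⊗ F)).inv ≫ ((F ⊗ F) ◁ η)))) ∧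
    (∀ εM : F ⟶ B, ∀ εt : F ⟶ 𝟙_ C,
      (ψ ≫ (εM ▷ B) ≫ m = (B ◁ εM) ≫ m) →
      εM = εt ≫ η →
      ((ψ ≫ (εt ▷ B) ≫ (λ_ B).hom = (B ◁ εt) ≫ (ρ_ B).hom) ∧
       (∀ μM : F ⊗ F ⟶ F ⊗ B,
          ((εM ⊗ₘ εM) ≫ m = μM ≫ (εM ▷ B) ≫ m) →
          μM ≫ (εt ▷ B) ≫ (λ_ B).hom = (εt ⊗ₘ εt) ≫ (λ_ (𝟙_ C)).hom ≫ η))) := by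

  obtain ⟨hassoc, hlu, hru, hcoassoc, hcl, hcr, hεm, hηΔ, hεη⟩ := hB
  have hmη : (η ▷ B) ≫ m = (λ_ B).hom := by
    rw [← cancel_epi (λ_ B).inv]; simpa using hlu
  have hmη' : (B ◁ η) ≫ m = (ρ_ B).hom := by
    rw [← cancel_epi (ρ_ B).inv]; simpa using hru
  constructor
  · intro ηM ηt h2 hc
    have hL : (λ_ B).inv ≫ (ηM ▷ B) ≫ (α_ F B B).hom ≫ (F ◁ m)
        = (λ_ B).inv ≫ (ηt ▷ B) := by
      rw [hc]
      simp only [comp_whiskerRight, Category.assoc]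
      slice_lhs 4 5 => rw [associator_naturality_middle]
      slice_lhs 5 6 => rw [← MonoidalCategory.whiskerLeft_comp, hmη]
      monoidal
    have key2 : (B ◁ ηM) ≫ (α_ B F B).inv ≫ (ψ ▷ B) ≫ (α_ F B B).hom ≫ (F ◁ m)
        = (B ◁ ηt) ≫ ψ := by
      rw [hc]
      simp only [MonoidalCategory.whiskerLeft_comp, Category.assoc]
      slice_lhs 3 4 => rw [associator_inv_naturality_right]
      slice_lhs 4 5 => rw [whisker_exchange]
      slice_lhs 5 6 => rw [associator_naturality_right]
      slice_lhs 6 7 => rw [← MonoidalCategory.whiskerLeft_comp, hmη']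
      slice_lhs 4 4 => rw [show ψ ▷ 𝟙_ C = (ρ_ _).hom ≫ ψ ≫ (ρ_ _).inv by monoidal]
      monoidal
    rw [key2, hL] at h2
    refine ⟨h2.symm, ?_⟩
    intro ΔM h3
    have inner2 : (η ▷ (F ⊗ B)) ≫ (α_ B F B).inv ≫ (ψ ▷ B) ≫ (α_ F B B).hom ≫ (F ◁ m)
        = (λ_ (F ⊗ B)).hom := by
      slice_lhs 1 2 => rw [associator_inv_naturality_left]
      slice_lhs 2 3 => rw [← comp_whiskerRight, hψη]
      simp only [comp_whiskerRight, Category.assoc]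
      slice_lhs 4 5 => rw [associator_naturality_middle]
      slice_lhs 5 6 => rw [← MonoidalCategory.whiskerLeft_comp, hmη]
      monoidal
    have inner2' : (F ◁ (η ▷ (F ⊗ B))) ≫ (F ◁ (α_ B F B).inv) ≫ (F ◁ (ψ ▷ B)) ≫
        (F ◁ (α_ F B B).hom) ≫ (F ◁ (F ◁ m)) = F ◁ (λ_ (F ⊗ B)).hom := by
      simp only [← MonoidalCategory.whiskerLeft_comp, Category.assoc]
      exact congrArg (fun t => F ◁ t) inner2
    have hL2 : ηM ≫ (ΔM ▷ B) ≫ (α_ (F ⊗ F) B B).hom ≫ ((F ⊗ F) ◁ m) = ηt ≫ ΔM := by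
      rw [hc]
      simp only [Category.assoc]
      slice_lhs 3 4 => rw [whisker_exchange]
      slice_lhs 4 5 => rw [associator_naturality_right]
      slice_lhs 5 6 => rw [← MonoidalCategory.whiskerLeft_comp, hmη']
      slice_lhs 3 3 => rw [show ΔM ▷ 𝟙_ C = (ρ_ _).hom ≫ ΔM ≫ (ρ_ _).inv by monoidal]
      monoidal
    have hR2 : (λ_ (𝟙_ C)).inv ≫ (ηM ⊗ₘ ηM) ≫ (α_ F B (F ⊗ B)).hom ≫
        (F ◁ (α_ B F B).inv) ≫ (F ◁ (ψ ▷ B)) ≫ (F ◁ (α_ F B B).hom) ≫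
        (F ◁ (F ◁ m)) ≫ (α_ F F B).inv
        = ((λ_ (𝟙_ C)).inv ≫ (ηt ⊗ₘ ηt)) ≫ (ρ_ (F ⊗ F)).inv ≫ ((F ⊗ F) ◁ η) := by
      have hsplit : ηM ⊗ₘ ηM
          = (ηt ⊗ₘ ηM) ≫ (((ρ_ F).inv ≫ (F ◁ η)) ▷ (F ⊗ B)) := by
        rw [hc, ← tensorHom_id, tensorHom_comp_tensorHom, Category.comp_id]
      rw [hsplit]
      simp only [comp_whiskerRight, Category.assoc]
      slice_lhs 4 5 => rw [associator_naturality_middle]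
      slice_lhs 5 9 => rw [inner2']
      rw [hc]
      simp only [MonoidalCategory.tensorHom_def, MonoidalCategory.whiskerLeft_comp, comp_whiskerRight, Category.assoc]
      monoidal
    rw [hL2, hR2] at h3
    exact h3
  · intro εM εt hε hc
    have key : ψ ≫ (εt ▷ B) ≫ (λ_ B).hom = (B ◁ εt) ≫ (ρ_ B).hom := by
      have := hε
      rw [hc] at this
      simp only [comp_whiskerRight, MonoidalCategory.whiskerLeft_comp, Category.assoc] at this
      rw [hmη, hmη'] at this
      exact this
    refine ⟨key, ?_⟩
    intro μM hμ
    rw [hc] at hμ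
    simp only [comp_whiskerRight, Category.assoc, hmη] at hμ
    rw [← tensorHom_comp_tensorHom] at hμ
    rw [← hμ, show η ⊗ₘ η = (η ▷ 𝟙_ C) ≫ (B ◁ η) from tensorHom_def η η]
    simp only [Category.assoc]
    slice_lhs 3 4 => rw [hmη']
    slice_lhs 2 3 => rw [rightUnitor_naturality]
    monoidal
end

section
/- Let C be a monoidal category, B an object with a bimonad datum (monoid (m,η), comonoid (Δ,ε), ε∘m = ε⊗ε, Δ∘η = η⊗η, ε∘η = id_𝟙), F an object, ψ : B⊗F → F⊗B a morphism, and ε̃ : F → 𝟙, η̃ : 𝟙 → F morphisms with ε̃∘η̃ = id_𝟙. (1) Suppose μ_M : F⊗F → F⊗B and η_M : 𝟙 → F⊗B satisfy the 2-cell conditions (id_F⊗m)∘(μ_M⊗id_B)∘(id_F⊗ψ)∘(ψ⊗id_F) = (id_F⊗m)∘(ψ⊗id_B)∘(id_B⊗μ_M) and (id_F⊗m)∘(η_M⊗id_B) = (id_F⊗m)∘(ψ⊗id_B)∘(id_B⊗η_M), that μ_M = μ̃⊗η and η_M = η̃⊗η are canonical, and that the 2-cocycle σ := (ε̃⊗id_B)∘μ_M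 is trivial, σ = η∘(ε̃⊗ε̃). Then ◁ := (ε̃⊗id_B)∘ψ : B⊗F → B is a right F-action: ◁∘(◁⊗id_F) = ◁∘(id_B⊗μ̃) and ◁∘(id_B⊗η̃) = id_B. (2) Suppose Δ_M : F → F⊗F⊗B and ε_M : F → B satisfy the 2-cell conditions (id_{F⊗F}⊗m)∘(Δ_M⊗id_B)∘ψ = (id_{F⊗F}⊗m)∘(id_F⊗ψ⊗id_B)∘(ψ⊗id_F⊗id_B)∘(id_B⊗Δ_M) and m∘(ε_M⊗id_B)∘ψ = m∘(id_B⊗ε_M), that Δ_M = Δ̃⊗η and ε_M = η∘ε̃ are canonical, and that the 3-cocycle Φ_λ := Δ_M∘η̃ is trivial, Φ_λ = η̃⊗η̃⊗η. Then ϱ := ψ∘(id_B⊗η̃) : B → F⊗B is a left F-coaction: (Δ̃⊗id_B)∘ϱ = (id_F⊗ϱ)∘ϱ and (ε̃⊗id_B)∘ϱ = id_B. -/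
set_option maxRecDepth 10000
open CategoryTheory MonoidalCategory

/-- (1) If `μ_M`, `η_M` satisfy the 2-cell conditions, are canonical,
and the 2-cocycle `σ` is trivial, then `◁ := (ε̃ ⊗ id_B) ∘ ψ` is a right `F`-action on
`B`.  (2) If `Δ_M`, `ε_M` satisfy the 2-cell conditions, are canonical, and the
3-cocycle `Φ_λ` is trivial, then `ϱ := ψ ∘ (id_B ⊗ η̃)` is a left `F`-coaction on `B`. -/
theorem statement7 {C : Type*} [Category C] [MonoidalCategory C]
    (B F : C) (m : B ⊗ B ⟶ B) (η : 𝟙_ C ⟶ B) (Δ : B ⟶ B ⊗ B) (ε : B ⟶ 𝟙_ C)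
    (hB : BimonadDatum B m η Δ ε)
    (ψ : B ⊗ F ⟶ F ⊗ B)
    (εt : F ⟶ 𝟙_ C) (ηt : 𝟙_ C ⟶ F)
    (hεη : ηt ≫ εt = 𝟙 (𝟙_ C)) :
    (∀ (μM : F ⊗ F ⟶ F ⊗ B) (ηM : 𝟙_ C ⟶ F ⊗ B) (μt : F ⊗ F ⟶ F),
      -- 2-cell condition for μ_M
      ((α_ B F F).inv ≫ (ψ ▷ F) ≫ (α_ F B F).hom ≫ (F ◁ ψ) ≫ (α_ F F B).inv ≫
          (μM ▷ B) ≫ (α_ F B B).hom ≫ (F ◁ m) =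
        (B ◁ μM) ≫ (α_ B F B).inv ≫ (ψ ▷ B) ≫ (α_ F B B).hom ≫ (F ◁ m)) →
      -- 2-cell condition for η_M
      ((λ_ B).inv ≫ (ηM ▷ B) ≫ (α_ F B B).hom ≫ (F ◁ m) =
        (ρ_ B).inv ≫ (B ◁ ηM) ≫ (α_ B F B).inv ≫ (ψ ▷ B) ≫
          (α_ F B B).hom ≫ (F ◁ m)) →
      -- canonicity
      μM = μt ≫ (ρ_ F).inv ≫ (F ◁ η) →
      ηM = ηt ≫ (ρ_ F).inv ≫ (F ◁ η) →
      -- triviality of the 2-cocycle σ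
      (μM ≫ (εt ▷ B) ≫ (λ_ B).hom = (εt ⊗ₘ εt) ≫ (λ_ (𝟙_ C)).hom ≫ η) →
      -- conclusion: ◁ is a right F-action on B
      ∀ act : B ⊗ F ⟶ B, act = ψ ≫ (εt ▷ B) ≫ (λ_ B).hom →
        ((act ▷ F) ≫ act = (α_ B F F).hom ≫ (B ◁ μt) ≫ act ∧
         (ρ_ B).inv ≫ (B ◁ ηt) ≫ act = 𝟙 B)) ∧
    (∀ (ΔM : F ⟶ (F ⊗ F) ⊗ B) (εM : F ⟶ B) (Δt : F ⟶ F ⊗ F),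
      -- 2-cell condition for Δ_M
      (ψ ≫ (ΔM ▷ B) ≫ (α_ (F ⊗ F) B B).hom ≫ ((F ⊗ F) ◁ m) =
        (B ◁ ΔM) ≫ (α_ B (F ⊗ F) B).inv ≫ ((α_ B F F).inv ▷ B) ≫
          ((ψ ▷ F) ▷ B) ≫ ((α_ F B F).hom ▷ B) ≫ ((F ◁ ψ) ▷ B) ≫
          (α_ F (F ⊗ B) B).hom ≫ (F ◁ (α_ F B B).hom) ≫ (F ◁ (F ◁ m)) ≫
          (α_ F F B).inv) →
      -- 2-cell condition for ε_M
      (ψ ≫ (εM ▷ B) ≫ m = (B ◁ εM) ≫ m) →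
      -- canonicity
      ΔM = Δt ≫ (ρ_ (F ⊗ F)).inv ≫ ((F ⊗ F) ◁ η) →
      εM = εt ≫ η →
      -- triviality of the 3-cocycle Φ_λ
      (ηt ≫ ΔM = ((λ_ (𝟙_ C)).inv ≫ (ηt ⊗ₘ ηt)) ≫ (ρ_ (F ⊗ F)).inv ≫
        ((F ⊗ F) ◁ η)) →
      -- conclusion: ϱ is a left F-coaction on B
      ∀ ϱ : B ⟶ F ⊗ B, ϱ = (ρ_ B).inv ≫ (B ◁ ηt) ≫ ψ →
        (ϱ ≫ (Δt ▷ B) = ϱ ≫ (F ◁ ϱ) ≫ (α_ F F B).inv ∧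
         ϱ ≫ (εt ▷ B) ≫ (λ_ B).hom = 𝟙 B)) := by
  obtain ⟨hm, hl, hr, hΔc, hΔl, hΔr, hmε, hηΔ, hηε⟩ := hB
  have hl' : (η ▷ B) ≫ m = (λ_ B).hom := by
    simpa using congrArg (fun f => (λ_ B).hom ≫ f) hl
  have hr' : (B ◁ η) ≫ m = (ρ_ B).hom := by
    simpa using congrArg (fun f => (ρ_ B).hom ≫ f) hr
  have keyA : ∀ X : C, (((ρ_ X).inv ≫ X ◁ η) ▷ B) ≫ ((α_ X B B).hom ≫ X ◁ m) = 𝟙 (X ⊗ B) := by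
    intro X
    rw [comp_whiskerRight, Category.assoc, associator_naturality_middle_assoc,
      ← MonoidalCategory.whiskerLeft_comp, hl']
    simp
  have keyB : B ◁ ((ρ_ F).inv ≫ F ◁ η) ≫ ((α_ B F B).inv ≫ (ψ ▷ B) ≫ (α_ F B B).hom ≫ (F ◁ m)) = ψ := by
    rw [MonoidalCategory.whiskerLeft_comp, Category.assoc, associator_inv_naturality_right_assoc,
      whisker_exchange_assoc, associator_naturality_right_assoc,
      ← MonoidalCategory.whiskerLeft_comp, hr']
    simp
  constructor
  · intro μM ηM μt h2 hu hμ hη hσ act hact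
    subst hμ hη hact
    simp only [comp_whiskerRight, MonoidalCategory.whiskerLeft_comp, Category.assoc] at h2 hu hσ
    have keyA' := keyA F
    have keyB' := keyB
    simp only [comp_whiskerRight, MonoidalCategory.whiskerLeft_comp, Category.assoc] at keyA' keyB'
    rw [keyA'] at h2 hu
    rw [keyB'] at h2 hu
    simp only [Category.comp_id] at h2 hu
    -- hσ cleanup : μt ≫ εt = (εt ⊗ εt) ≫ (λ_ 𝟙).hom
    rw [whisker_exchange_assoc, ← rightUnitor_inv_naturality_assoc,
      MonoidalCategory.leftUnitor_naturality] at hσ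
    have hσ' : μt ≫ εt = (εt ⊗ₘ εt) ≫ (λ_ (𝟙_ C)).hom := by
      have h := congrArg (fun f => f ≫ ε) hσ
      simpa [hηε, unitors_equal, unitors_inv_equal] using h
    constructor
    · rw [reassoc_of% h2.symm]
      have T1 : (εt ▷ B) ▷ F ≫ (λ_ B).hom ▷ F ≫ ψ ≫ εt ▷ B ≫ (λ_ B).hom =
          (α_ F B F).hom ≫ F ◁ ψ ≫ (α_ F F B).inv ≫ ((εt ⊗ₘ εt) ≫ (λ_ (𝟙_ C)).hom) ▷ B ≫ (λ_ B).hom := by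
        simp [MonoidalCategory.tensorHom_def, whisker_exchange]
        rw [associator_naturality_left_assoc, associator_naturality_left_assoc]
        simp only [Iso.inv_hom_id_assoc]
        rw [whisker_exchange_assoc, MonoidalCategory.leftUnitor_naturality_assoc]
      simp only [comp_whiskerRight, Category.assoc, Iso.hom_inv_id_assoc]
      rw [← comp_whiskerRight_assoc μt εt, hσ']
      rw [T1]
    · rw [reassoc_of% hu.symm, ← comp_whiskerRight_assoc, hεη]
      simp
  · intro ΔM εM Δt h2 hcu hΔM hεM hΦ ϱ hϱ
    subst hΔM hεM hϱ
    simp only [comp_whiskerRight, MonoidalCategory.whiskerLeft_comp, Category.assoc] at h2 hcu hΦ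
    rw [hl', hr'] at hcu
    have keyA' := keyA (F ⊗ F)
    simp only [comp_whiskerRight, MonoidalCategory.whiskerLeft_comp, Category.assoc] at keyA'
    rw [keyA'] at h2
    have keyD : B ◁ (ρ_ (F ⊗ F)).inv ≫ B ◁ ((F ⊗ F) ◁ η) ≫ (α_ B (F ⊗ F) B).inv ≫
        (α_ B F F).inv ▷ B ≫ (ψ ▷ F) ▷ B ≫ (α_ F B F).hom ▷ B ≫ (F ◁ ψ) ▷ B ≫
        (α_ F (F ⊗ B) B).hom ≫ F ◁ (α_ F B B).hom ≫ F ◁ (F ◁ m) ≫ (α_ F F B).inv =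
        (α_ B F F).inv ≫ ψ ▷ F ≫ (α_ F B F).hom ≫ F ◁ ψ ≫ (α_ F F B).inv := by
      have hrw2 : F ◁ (F ◁ (B ◁ η)) ≫ F ◁ (F ◁ m) = F ◁ (F ◁ (ρ_ B).hom) := by
        rw [← MonoidalCategory.whiskerLeft_comp, ← MonoidalCategory.whiskerLeft_comp, hr']
      rw [associator_inv_naturality_right_assoc, whisker_exchange_assoc,
        whisker_exchange_assoc, whisker_exchange_assoc, whisker_exchange_assoc,
        associator_naturality_right_assoc,
        ← MonoidalCategory.whiskerLeft_comp_assoc (F) _ ((α_ F B B).hom),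
        associator_naturality_right, MonoidalCategory.whiskerLeft_comp_assoc,
        reassoc_of% hrw2]
      monoidal
    rw [keyD] at h2
    simp only [Category.comp_id] at h2
    have hΦ' : ηt ≫ Δt = (λ_ (𝟙_ C)).inv ≫ (ηt ⊗ₘ ηt) := by
      have h := congrArg (fun f => f ≫ ((F ⊗ F) ◁ ε)) hΦ
      simp only [Category.assoc, ← MonoidalCategory.whiskerLeft_comp, hηε,
        MonoidalCategory.whiskerLeft_id, Category.comp_id] at h
      simpa using congrArg (fun f => f ≫ (ρ_ (F ⊗ F)).hom) h
    constructor
    · simp only [Category.assoc]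
      rw [h2, ← MonoidalCategory.whiskerLeft_comp_assoc, hΦ', MonoidalCategory.tensorHom_def]
      simp only [MonoidalCategory.whiskerLeft_comp, Category.assoc]
      rw [associator_inv_naturality_right_assoc, whisker_exchange_assoc,
        associator_naturality_right_assoc, associator_inv_naturality_middle_assoc,
        ← comp_whiskerRight_assoc]
      monoidal
    · simp only [Category.assoc]
      rw [hcu, ← MonoidalCategory.whiskerLeft_comp_assoc, hεη]
      simp
end

section
/- Let F be a bialgebra in a braided monoidal category C with braiding c, and let σ : F⊗F → 𝟙 be a morphism. Define the σ-twisted multiplication m_σ := (m⊗σ)∘(id_F⊗c_{F,F}⊗id_F)∘(Δ⊗Δ) : F⊗F → F. If σ is a normalized Sweedler 2-cocycle, i.e. σ∘(id_F⊗m_σ) = σ∘(m_σ⊗id_F) : F⊗F⊗F → 𝟙 and σ∘(η⊗id_F) = ε = σ∘(id_F⊗η), then m_σ is an associative multiplication on F with unit η: m_σ∘(m_σ⊗id_F) = m_σ∘(id_F⊗m_σ) and m_σ∘(η⊗id_F) = id_F = m_σ∘(id_F⊗η). -/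
open CategoryTheory MonoidalCategory

section Aux

variable {C : Type*} [Category C] [MonoidalCategory C] [BraidedCategory C]

lemma exch_eq_tensorμ (X Y Z W : C) : exch X Y Z W = tensorμ X Y Z W := by
  simp [exch, tensorμ]

variable (F : C) (m : F ⊗ F ⟶ F) (η : 𝟙_ C ⟶ F) (Δ : F ⟶ F ⊗ F) (ε : F ⟶ 𝟙_ C)
    (σ : F ⊗ F ⟶ 𝟙_ C) (mσ : F ⊗ F ⟶ F)

/-- Coassociativity of the comultiplication of the tensor-square comonoid. -/
lemma aux_key (hco : Δ ≫ Δ ▷ F = Δ ≫ F ◁ Δ ≫ (α_ F F F).inv) :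
    ((Δ ⊗ₘ Δ) ≫ tensorμ F F F F) ≫ (((Δ ⊗ₘ Δ) ≫ tensorμ F F F F) ▷ (F ⊗ F)) =
      ((Δ ⊗ₘ Δ) ≫ tensorμ F F F F) ≫ ((F ⊗ F) ◁ ((Δ ⊗ₘ Δ) ≫ tensorμ F F F F)) ≫
        (α_ (F ⊗ F) (F ⊗ F) (F ⊗ F)).inv := by
  calc ((Δ ⊗ₘ Δ) ≫ tensorμ F F F F) ≫ (((Δ ⊗ₘ Δ) ≫ tensorμ F F F F) ▷ (F ⊗ F))
      = (Δ ⊗ₘ Δ) ≫ (tensorμ F F F F ≫ ((Δ ⊗ₘ Δ) ⊗ₘ (𝟙 F ⊗ₘ 𝟙 F))) ≫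
          (tensorμ F F F F ▷ (F ⊗ F)) := by
        simp only [comp_whiskerRight, Category.assoc, id_tensorHom_id, tensorHom_id,
          MonoidalCategory.id_whiskerRight]
    _ = (Δ ⊗ₘ Δ) ≫ (((Δ ⊗ₘ 𝟙 F) ⊗ₘ (Δ ⊗ₘ 𝟙 F)) ≫ tensorμ (F ⊗ F) F (F ⊗ F) F) ≫
          (tensorμ F F F F ▷ (F ⊗ F)) := by rw [← tensorμ_natural]
    _ = ((Δ ≫ (Δ ▷ F)) ⊗ₘ (Δ ≫ (Δ ▷ F))) ≫ tensorμ (F ⊗ F) F (F ⊗ F) F ≫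
          (tensorμ F F F F ▷ (F ⊗ F)) := by
        simp only [tensorHom_id, tensorHom_comp_tensorHom_assoc, Category.assoc]
    _ = ((Δ ≫ (F ◁ Δ)) ⊗ₘ (Δ ≫ (F ◁ Δ))) ≫ ((α_ F F F).inv ⊗ₘ (α_ F F F).inv) ≫
          tensorμ (F ⊗ F) F (F ⊗ F) F ≫ (tensorμ F F F F ▷ (F ⊗ F)) := by
        rw [hco]; simp only [tensorHom_comp_tensorHom_assoc, Category.assoc]
    _ = ((Δ ≫ (F ◁ Δ)) ⊗ₘ (Δ ≫ (F ◁ Δ))) ≫ ((α_ F F F).inv ⊗ₘ (α_ F F F).inv) ≫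
          ((α_ F F F).hom ⊗ₘ (α_ F F F).hom) ≫ tensorμ F (F ⊗ F) F (F ⊗ F) ≫
          ((F ⊗ F) ◁ tensorμ F F F F) ≫ (α_ (F ⊗ F) (F ⊗ F) (F ⊗ F)).inv := by
        rw [← associator_monoidal_assoc]; simp
    _ = (Δ ⊗ₘ Δ) ≫ (((𝟙 F ⊗ₘ Δ) ⊗ₘ (𝟙 F ⊗ₘ Δ)) ≫ tensorμ F (F ⊗ F) F (F ⊗ F)) ≫
          ((F ⊗ F) ◁ tensorμ F F F F) ≫ (α_ (F ⊗ F) (F ⊗ F) (F ⊗ F)).inv := by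
        simp only [tensorHom_comp_tensorHom_assoc, Category.assoc, Iso.inv_hom_id, Category.comp_id,
          id_tensorHom, Category.id_comp, MonoidalCategory.whiskerLeft_id]
    _ = (Δ ⊗ₘ Δ) ≫ (tensorμ F F F F ≫ ((𝟙 F ⊗ₘ 𝟙 F) ⊗ₘ (Δ ⊗ₘ Δ))) ≫
          ((F ⊗ F) ◁ tensorμ F F F F) ≫ (α_ (F ⊗ F) (F ⊗ F) (F ⊗ F)).inv := by
        rw [tensorμ_natural]
    _ = _ := by
        simp only [id_tensorHom_id, id_tensorHom, Category.assoc,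
          MonoidalCategory.whiskerLeft_id, MonoidalCategory.whiskerLeft_comp]

lemma aux_star :
    (((Δ ⊗ₘ Δ) ≫ tensorμ F F F F) ⊗ₘ Δ) ≫ tensorμ (F ⊗ F) (F ⊗ F) F F ≫
        ((α_ F F F).hom ⊗ₘ (α_ F F F).hom) =
      (α_ F F F).hom ≫ (Δ ⊗ₘ ((Δ ⊗ₘ Δ) ≫ tensorμ F F F F)) ≫
        tensorμ F F (F ⊗ F) (F ⊗ F) := by
  calc (((Δ ⊗ₘ Δ) ≫ tensorμ F F F F) ⊗ₘ Δ) ≫ tensorμ (F ⊗ F) (F ⊗ F) F F ≫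
        ((α_ F F F).hom ⊗ₘ (α_ F F F).hom)
      = ((Δ ⊗ₘ Δ) ⊗ₘ Δ) ≫ (tensorμ F F F F ▷ (F ⊗ F)) ≫
          tensorμ (F ⊗ F) (F ⊗ F) F F ≫ ((α_ F F F).hom ⊗ₘ (α_ F F F).hom) := by
        rw [← tensorHom_id (tensorμ F F F F), tensorHom_comp_tensorHom_assoc, Category.comp_id]
    _ = ((Δ ⊗ₘ Δ) ⊗ₘ Δ) ≫ (α_ (F ⊗ F) (F ⊗ F) (F ⊗ F)).hom ≫
          ((F ⊗ F) ◁ tensorμ F F F F) ≫ tensorμ F F (F ⊗ F) (F ⊗ F) := by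
        rw [tensor_associativity]
    _ = (α_ F F F).hom ≫ (Δ ⊗ₘ (Δ ⊗ₘ Δ)) ≫
          ((F ⊗ F) ◁ tensorμ F F F F) ≫ tensorμ F F (F ⊗ F) (F ⊗ F) := by
        rw [associator_naturality_assoc]
    _ = _ := by
        simp only [← id_tensorHom, tensorHom_comp_tensorHom_assoc, Category.comp_id, Category.id_comp]

lemma aux_ΔL (hmσ : mσ = ((Δ ⊗ₘ Δ) ≫ tensorμ F F F F) ≫ (m ⊗ₘ σ) ≫ (ρ_ F).hom)
    (hmΔ : m ≫ Δ = ((Δ ⊗ₘ Δ) ≫ tensorμ F F F F) ≫ (m ⊗ₘ m))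
    (hco : Δ ≫ Δ ▷ F = Δ ≫ F ◁ Δ ≫ (α_ F F F).inv) :
    mσ ≫ Δ = ((Δ ⊗ₘ Δ) ≫ tensorμ F F F F) ≫ (m ⊗ₘ mσ) := by
  set δ₂ : F ⊗ F ⟶ (F ⊗ F) ⊗ (F ⊗ F) := (Δ ⊗ₘ Δ) ≫ tensorμ F F F F with hδ₂
  have key := aux_key F Δ hco
  rw [← hδ₂] at key
  have tri : (α_ F F (𝟙_ C)).inv ≫ (ρ_ (F ⊗ F)).hom = F ◁ (ρ_ F).hom := by monoidal
  calc mσ ≫ Δ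
      = δ₂ ≫ ((m ≫ Δ) ⊗ₘ σ) ≫ (ρ_ (F ⊗ F)).hom := by
        rw [hmσ]
        simp only [Category.assoc]
        rw [← rightUnitor_naturality]
        rw [← tensorHom_id Δ, tensorHom_comp_tensorHom_assoc, Category.comp_id]
    _ = δ₂ ≫ (δ₂ ▷ (F ⊗ F)) ≫ ((m ⊗ₘ m) ⊗ₘ σ) ≫ (ρ_ (F ⊗ F)).hom := by
        rw [hmΔ, ← Category.id_comp σ, ← tensorHom_comp_tensorHom_assoc, Category.id_comp,
          tensorHom_id]
    _ = δ₂ ≫ ((F ⊗ F) ◁ δ₂) ≫ (α_ (F ⊗ F) (F ⊗ F) (F ⊗ F)).inv ≫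
          ((m ⊗ₘ m) ⊗ₘ σ) ≫ (ρ_ (F ⊗ F)).hom := by
        rw [← Category.assoc δ₂, key]; simp only [Category.assoc]
    _ = δ₂ ≫ (m ⊗ₘ mσ) := by
        rw [← associator_inv_naturality_assoc, tri, hmσ]
        simp only [← id_tensorHom, tensorHom_comp_tensorHom, Category.id_comp, Category.comp_id,
          Category.assoc]

lemma aux_L (hmσ : mσ = ((Δ ⊗ₘ Δ) ≫ tensorμ F F F F) ≫ (m ⊗ₘ σ) ≫ (ρ_ F).hom)
    (hΔL : mσ ≫ Δ = ((Δ ⊗ₘ Δ) ≫ tensorμ F F F F) ≫ (m ⊗ₘ mσ)) :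
    mσ ▷ F ≫ mσ = (((Δ ⊗ₘ Δ) ≫ tensorμ F F F F) ⊗ₘ Δ) ≫ tensorμ (F ⊗ F) (F ⊗ F) F F ≫
        ((m ▷ F ≫ m) ⊗ₘ (mσ ▷ F ≫ σ)) ≫ (ρ_ F).hom := by
  calc mσ ▷ F ≫ mσ
      = ((mσ ≫ Δ) ⊗ₘ Δ) ≫ tensorμ F F F F ≫ (m ⊗ₘ σ) ≫ (ρ_ F).hom := by
        nth_rewrite 2 [hmσ]
        rw [← tensorHom_id mσ, Category.assoc, tensorHom_comp_tensorHom_assoc, Category.id_comp]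
    _ = (((Δ ⊗ₘ Δ) ≫ tensorμ F F F F) ⊗ₘ Δ) ≫ ((m ⊗ₘ mσ) ▷ (F ⊗ F)) ≫
          tensorμ F F F F ≫ (m ⊗ₘ σ) ≫ (ρ_ F).hom := by
        rw [hΔL, ← tensorHom_id (m ⊗ₘ mσ), tensorHom_comp_tensorHom_assoc, Category.comp_id]
    _ = _ := by
        rw [tensorμ_natural_left_assoc, tensorHom_comp_tensorHom_assoc]

lemma aux_R (hmσ : mσ = ((Δ ⊗ₘ Δ) ≫ tensorμ F F F F) ≫ (m ⊗ₘ σ) ≫ (ρ_ F).hom)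
    (hΔL : mσ ≫ Δ = ((Δ ⊗ₘ Δ) ≫ tensorμ F F F F) ≫ (m ⊗ₘ mσ)) :
    (α_ F F F).hom ≫ F ◁ mσ ≫ mσ =
      (α_ F F F).hom ≫ (Δ ⊗ₘ ((Δ ⊗ₘ Δ) ≫ tensorμ F F F F)) ≫ tensorμ F F (F ⊗ F) (F ⊗ F) ≫
        ((F ◁ m ≫ m) ⊗ₘ (F ◁ mσ ≫ σ)) ≫ (ρ_ F).hom := by
  congr 1
  calc F ◁ mσ ≫ mσ
      = (Δ ⊗ₘ (mσ ≫ Δ)) ≫ tensorμ F F F F ≫ (m ⊗ₘ σ) ≫ (ρ_ F).hom := by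
        nth_rewrite 2 [hmσ]
        rw [← id_tensorHom F mσ, Category.assoc, tensorHom_comp_tensorHom_assoc, Category.id_comp]
    _ = (Δ ⊗ₘ ((Δ ⊗ₘ Δ) ≫ tensorμ F F F F)) ≫ ((F ⊗ F) ◁ (m ⊗ₘ mσ)) ≫
          tensorμ F F F F ≫ (m ⊗ₘ σ) ≫ (ρ_ F).hom := by
        rw [hΔL, ← id_tensorHom (F ⊗ F) (m ⊗ₘ mσ), tensorHom_comp_tensorHom_assoc, Category.comp_id]
    _ = _ := by
        rw [tensorμ_natural_right_assoc, tensorHom_comp_tensorHom_assoc]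

lemma aux_unit_l (hηΔ : η ≫ Δ = (λ_ (𝟙_ C)).inv ≫ (η ⊗ₘ η))
    (hlu : (λ_ F).inv ≫ η ▷ F ≫ m = 𝟙 F)
    (hσl : (λ_ F).inv ≫ η ▷ F ≫ σ = ε)
    (hεr : Δ ≫ F ◁ ε ≫ (ρ_ F).hom = 𝟙 F) :
    (λ_ F).inv ≫ η ▷ F ≫ (((Δ ⊗ₘ Δ) ≫ tensorμ F F F F) ≫ (m ⊗ₘ σ) ≫ (ρ_ F).hom) = 𝟙 F := by
  rw [Iso.inv_comp_eq] at hlu hσl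
  have hm' : η ▷ F ≫ m = (λ_ F).hom := by simpa using hlu
  have hσ' : η ▷ F ≫ σ = (λ_ F).hom ≫ ε := hσl
  have split : ((λ_ F).hom ⊗ₘ ((λ_ F).hom ≫ ε)) = ((λ_ F).hom ⊗ₘ (λ_ F).hom) ≫ (F ◁ ε) := by
    rw [← id_tensorHom F ε, tensorHom_comp_tensorHom, Category.comp_id]
  have tlu : tensorμ (𝟙_ C) (𝟙_ C) F F ≫ ((λ_ F).hom ⊗ₘ (λ_ F).hom) =
      ((λ_ (𝟙_ C)).hom ▷ (F ⊗ F)) ≫ (λ_ (F ⊗ F)).hom := by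
    rw [tensor_left_unitality F F, ← comp_whiskerRight_assoc]
    simp
  have collapse : (λ_ F).inv ≫ ((λ_ (𝟙_ C)).inv ⊗ₘ Δ) ≫ ((λ_ (𝟙_ C)).hom ▷ (F ⊗ F)) ≫
      (λ_ (F ⊗ F)).hom = Δ := by
    rw [MonoidalCategory.tensorHom_def]
    simp [whisker_exchange_assoc]
  calc (λ_ F).inv ≫ η ▷ F ≫ (((Δ ⊗ₘ Δ) ≫ tensorμ F F F F) ≫ (m ⊗ₘ σ) ≫ (ρ_ F).hom)
      = (λ_ F).inv ≫ (((λ_ (𝟙_ C)).inv ≫ (η ⊗ₘ η)) ⊗ₘ Δ) ≫ tensorμ F F F F ≫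
          (m ⊗ₘ σ) ≫ (ρ_ F).hom := by
        rw [← tensorHom_id η F, Category.assoc, tensorHom_comp_tensorHom_assoc, Category.id_comp, hηΔ]
    _ = (λ_ F).inv ≫ ((λ_ (𝟙_ C)).inv ⊗ₘ Δ) ≫ (((η ⊗ₘ η) ⊗ₘ (𝟙 F ⊗ₘ 𝟙 F)) ≫ tensorμ F F F F) ≫
          (m ⊗ₘ σ) ≫ (ρ_ F).hom := by
        rw [← Category.comp_id Δ, ← id_tensorHom_id, ← tensorHom_comp_tensorHom_assoc]
        simp only [Category.assoc, Category.comp_id, id_tensorHom_id]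
    _ = (λ_ F).inv ≫ ((λ_ (𝟙_ C)).inv ⊗ₘ Δ) ≫ tensorμ (𝟙_ C) (𝟙_ C) F F ≫
          ((η ▷ F ≫ m) ⊗ₘ (η ▷ F ≫ σ)) ≫ (ρ_ F).hom := by
        rw [tensorμ_natural]
        simp only [Category.assoc, tensorHom_comp_tensorHom_assoc, tensorHom_id]
    _ = ((λ_ F).inv ≫ ((λ_ (𝟙_ C)).inv ⊗ₘ Δ) ≫ ((λ_ (𝟙_ C)).hom ▷ (F ⊗ F)) ≫
          (λ_ (F ⊗ F)).hom) ≫ (F ◁ ε) ≫ (ρ_ F).hom := by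
        rw [hm', hσ', split, ← tlu]
        simp only [Category.assoc]
    _ = 𝟙 F := by rw [collapse, hεr]

lemma aux_unit_r (hηΔ : η ≫ Δ = (λ_ (𝟙_ C)).inv ≫ (η ⊗ₘ η))
    (hru : (ρ_ F).inv ≫ F ◁ η ≫ m = 𝟙 F)
    (hσr : (ρ_ F).inv ≫ F ◁ η ≫ σ = ε)
    (hεr : Δ ≫ F ◁ ε ≫ (ρ_ F).hom = 𝟙 F) :
    (ρ_ F).inv ≫ F ◁ η ≫ (((Δ ⊗ₘ Δ) ≫ tensorμ F F F F) ≫ (m ⊗ₘ σ) ≫ (ρ_ F).hom) = 𝟙 F := by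
  rw [Iso.inv_comp_eq] at hru hσr
  have hm' : F ◁ η ≫ m = (ρ_ F).hom := by simpa using hru
  have hσ' : F ◁ η ≫ σ = (ρ_ F).hom ≫ ε := hσr
  have split : ((ρ_ F).hom ⊗ₘ ((ρ_ F).hom ≫ ε)) = ((ρ_ F).hom ⊗ₘ (ρ_ F).hom) ≫ (F ◁ ε) := by
    rw [← id_tensorHom F ε, tensorHom_comp_tensorHom, Category.comp_id]
  have tru : tensorμ F F (𝟙_ C) (𝟙_ C) ≫ ((ρ_ F).hom ⊗ₘ (ρ_ F).hom) =
      ((F ⊗ F) ◁ (λ_ (𝟙_ C)).hom) ≫ (ρ_ (F ⊗ F)).hom := by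
    rw [tensor_right_unitality F F, ← MonoidalCategory.whiskerLeft_comp_assoc]
    simp
  have collapse : (ρ_ F).inv ≫ (Δ ⊗ₘ (λ_ (𝟙_ C)).inv) ≫ ((F ⊗ F) ◁ (λ_ (𝟙_ C)).hom) ≫
      (ρ_ (F ⊗ F)).hom = Δ := by
    rw [MonoidalCategory.tensorHom_def]
    simp [rightUnitor_naturality]
  calc (ρ_ F).inv ≫ F ◁ η ≫ (((Δ ⊗ₘ Δ) ≫ tensorμ F F F F) ≫ (m ⊗ₘ σ) ≫ (ρ_ F).hom)
      = (ρ_ F).inv ≫ (Δ ⊗ₘ ((λ_ (𝟙_ C)).inv ≫ (η ⊗ₘ η))) ≫ tensorμ F F F F ≫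
          (m ⊗ₘ σ) ≫ (ρ_ F).hom := by
        rw [← id_tensorHom F η, Category.assoc, tensorHom_comp_tensorHom_assoc, Category.id_comp, hηΔ]
    _ = (ρ_ F).inv ≫ (Δ ⊗ₘ (λ_ (𝟙_ C)).inv) ≫ (((𝟙 F ⊗ₘ 𝟙 F) ⊗ₘ (η ⊗ₘ η)) ≫ tensorμ F F F F) ≫
          (m ⊗ₘ σ) ≫ (ρ_ F).hom := by
        rw [← Category.comp_id Δ, ← id_tensorHom_id, ← tensorHom_comp_tensorHom_assoc]
        simp only [Category.assoc, Category.comp_id, id_tensorHom_id]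
    _ = (ρ_ F).inv ≫ (Δ ⊗ₘ (λ_ (𝟙_ C)).inv) ≫ tensorμ F F (𝟙_ C) (𝟙_ C) ≫
          ((F ◁ η ≫ m) ⊗ₘ (F ◁ η ≫ σ)) ≫ (ρ_ F).hom := by
        rw [tensorμ_natural]
        simp only [Category.assoc, tensorHom_comp_tensorHom_assoc, id_tensorHom]
    _ = ((ρ_ F).inv ≫ (Δ ⊗ₘ (λ_ (𝟙_ C)).inv) ≫ ((F ⊗ F) ◁ (λ_ (𝟙_ C)).hom) ≫
          (ρ_ (F ⊗ F)).hom) ≫ (F ◁ ε) ≫ (ρ_ F).hom := by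
        rw [hm', hσ', split, ← tru]
        simp only [Category.assoc]
    _ = 𝟙 F := by rw [collapse, hεr]

end Aux

/-- If `σ : F ⊗ F ⟶ 𝟙` is a normalized Sweedler 2-cocycle on a
bialgebra `F` in a braided monoidal category, then the `σ`-twisted multiplication
`m_σ := (m ⊗ₘ σ) ∘ (id ⊗ₘ c ⊗ₘ id) ∘ (Δ ⊗ₘ Δ)` is associative with unit `η`. -/
theorem statement12 {C : Type*} [Category C] [MonoidalCategory C] [BraidedCategory C]
    (F : C) (m : F ⊗ F ⟶ F) (η : 𝟙_ C ⟶ F) (Δ : F ⟶ F ⊗ F) (ε : F ⟶ 𝟙_ C)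
    (hF : IsBialgebraIn F m η Δ ε)
    (σ : F ⊗ F ⟶ 𝟙_ C) :
    ∀ mσ : F ⊗ F ⟶ F, mσ = (Δ ⊗ₘ Δ) ≫ exch F F F F ≫ (m ⊗ₘ σ) ≫ (ρ_ F).hom →
      -- σ is a normalized Sweedler 2-cocycle
      ((α_ F F F).hom ≫ (F ◁ mσ) ≫ σ = (mσ ▷ F) ≫ σ) →
      ((λ_ F).inv ≫ (η ▷ F) ≫ σ = ε) →
      ((ρ_ F).inv ≫ (F ◁ η) ≫ σ = ε) →
      -- conclusion: m_σ is associative and unital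
      ((mσ ▷ F) ≫ mσ = (α_ F F F).hom ≫ (F ◁ mσ) ≫ mσ ∧
       (λ_ F).inv ≫ (η ▷ F) ≫ mσ = 𝟙 F ∧
       (ρ_ F).inv ≫ (F ◁ η) ≫ mσ = 𝟙 F) := by
  intro mσ hm hcoc hσl hσr
  obtain ⟨hassoc, hlu, hru, hco, hεl, hεr, hcompat, hmε, hηΔ, hηε⟩ := hF
  rw [exch_eq_tensorμ] at hm hcompat
  have hmσ : mσ = ((Δ ⊗ₘ Δ) ≫ tensorμ F F F F) ≫ (m ⊗ₘ σ) ≫ (ρ_ F).hom := by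
    rw [hm]; simp only [Category.assoc]
  have hmΔ : m ≫ Δ = ((Δ ⊗ₘ Δ) ≫ tensorμ F F F F) ≫ (m ⊗ₘ m) := by
    rw [hcompat]; simp only [Category.assoc]
  have hΔL := aux_ΔL F m Δ σ mσ hmσ hmΔ hco
  have hL := aux_L F m Δ σ mσ hmσ hΔL
  have hR := aux_R F m Δ σ mσ hmσ hΔL
  have star := aux_star F Δ
  refine ⟨?_, ?_, ?_⟩
  · rw [hL, hR, hassoc, ← hcoc]
    calc (((Δ ⊗ₘ Δ) ≫ tensorμ F F F F) ⊗ₘ Δ) ≫ tensorμ (F ⊗ F) (F ⊗ F) F F ≫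
          (((α_ F F F).hom ≫ (F ◁ m) ≫ m) ⊗ₘ ((α_ F F F).hom ≫ (F ◁ mσ) ≫ σ)) ≫ (ρ_ F).hom
        = ((((Δ ⊗ₘ Δ) ≫ tensorμ F F F F) ⊗ₘ Δ) ≫ tensorμ (F ⊗ F) (F ⊗ F) F F ≫
            ((α_ F F F).hom ⊗ₘ (α_ F F F).hom)) ≫
          (((F ◁ m) ≫ m) ⊗ₘ ((F ◁ mσ) ≫ σ)) ≫ (ρ_ F).hom := by
          rw [← tensorHom_comp_tensorHom]; simp only [Category.assoc]
      _ = _ := by rw [star]; simp only [Category.assoc]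
  · rw [hmσ]; exact aux_unit_l F m η Δ ε σ hηΔ hlu hσl hεr
  · rw [hmσ]; exact aux_unit_r F m η Δ ε σ hηΔ hru hσr hεr
end

section
/- Let F be a bialgebra in a braided monoidal category C with braiding c, and let ρ : 𝟙 → F⊗F be a morphism. Define the ρ-twisted comultiplication Δ_ρ := (m⊗m)∘(id_F⊗c_{F,F}⊗id_F)∘(Δ⊗ρ) : F → F⊗F (where F is identified with F⊗𝟙). If ρ is a normalized Drinfel'd twist, i.e. (Δ_ρ⊗id_F)∘ρ = (id_F⊗Δ_ρ)∘ρ : 𝟙 → F⊗F⊗F and (ε⊗id_F)∘ρ = η = (id_F⊗ε)∘ρ, then Δ_ρ is a coassociative comultiplication on F with counit ε: (Δ_ρ⊗id_F)∘Δ_ρ = (id_F⊗Δ_ρ)∘Δ_ρ and (ε⊗id_F)∘Δ_ρ = id_F = (id_F⊗ε)∘Δ_ρ. -/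
open CategoryTheory MonoidalCategory

set_option linter.unusedSectionVars false

namespace Statement13Aux

variable {C : Type*} [Category C] [MonoidalCategory C] [BraidedCategory C]

/-- Right multiplication by an "element" `r : 𝟙 ⟶ N.X` of a monoid object `N`. -/
def rmul (N : Mon C) (r : 𝟙_ C ⟶ N.X) : N.X ⟶ N.X :=
  (ρ_ N.X).inv ≫ (N.X ◁ r) ≫ MonObj.mul (X := N.X)

lemma rmul_hom {N N' : Mon C} (f : N ⟶ N') (r : 𝟙_ C ⟶ N.X) :
    rmul N r ≫ f.hom = f.hom ≫ rmul N' (r ≫ f.hom) := by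
  simp only [rmul, Category.assoc, IsMonHom.mul_hom, MonoidalCategory.tensorHom_def]
  slice_lhs 2 3 => rw [whisker_exchange]
  slice_rhs 1 2 => rw [rightUnitor_inv_naturality]
  simp [MonoidalCategory.whiskerLeft_comp]

lemma rmul_rmul (N : Mon C) (r s : 𝟙_ C ⟶ N.X) :
    rmul N r ≫ rmul N s = rmul N (r ≫ rmul N s) := by
  simp only [rmul, MonoidalCategory.whiskerLeft_comp, Category.assoc]
  slice_lhs 3 4 => rw [rightUnitor_inv_naturality]
  slice_lhs 4 5 => rw [← whisker_exchange]
  slice_lhs 5 6 => rw [MonObj.mul_assoc]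
  slice_lhs 4 5 => rw [associator_naturality_right]
  have h : (ρ_ (N.X ⊗ N.X)).inv ≫ (α_ N.X N.X (𝟙_ C)).hom = N.X ◁ (ρ_ N.X).inv := by
    monoidal
  slice_lhs 3 4 => rw [h]
  simp

lemma rmul_whiskerRight (N P : Mon C) (r : 𝟙_ C ⟶ N.X) :
    rmul N r ▷ P.X = rmul (N ⊗ P) ((λ_ (𝟙_ C)).inv ≫ (r ⊗ₘ MonObj.one (X := P.X))) := by
  simp only [rmul, Mon.monMonoidalStruct_tensorObj_X, Mon.tensorObj_mul,
    MonoidalCategory.whiskerLeft_comp, Category.assoc]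
  slice_rhs 3 4 => rw [tensorμ_natural_right]
  have h : ((N.X ⊗ P.X) ◁ (λ_ (𝟙_ C)).inv) ≫ tensorμ N.X P.X (𝟙_ C) (𝟙_ C)
      = (ρ_ (N.X ⊗ P.X)).hom ≫ ((ρ_ N.X).inv ⊗ₘ (ρ_ P.X).inv) := by
    rw [← cancel_mono ((ρ_ N.X).hom ⊗ₘ (ρ_ P.X).hom), Category.assoc, Category.assoc,
      ← tensor_right_unitality]
    simp [tensorHom_comp_tensorHom]
  slice_rhs 2 3 => rw [h]
  simp only [Iso.inv_hom_id_assoc, tensorHom_comp_tensorHom_assoc, tensorHom_comp_tensorHom, Category.assoc,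
    MonObj.mul_one, Iso.inv_hom_id, Category.comp_id, tensorHom_id]

lemma rmul_whiskerLeft (P N : Mon C) (r : 𝟙_ C ⟶ N.X) :
    P.X ◁ rmul N r = rmul (P ⊗ N) ((λ_ (𝟙_ C)).inv ≫ (MonObj.one (X := P.X) ⊗ₘ r)) := by
  simp only [rmul, Mon.monMonoidalStruct_tensorObj_X, Mon.tensorObj_mul,
    MonoidalCategory.whiskerLeft_comp, Category.assoc]
  slice_rhs 3 4 => rw [tensorμ_natural_right]
  have h : ((P.X ⊗ N.X) ◁ (λ_ (𝟙_ C)).inv) ≫ tensorμ P.X N.X (𝟙_ C) (𝟙_ C)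
      = (ρ_ (P.X ⊗ N.X)).hom ≫ ((ρ_ P.X).inv ⊗ₘ (ρ_ N.X).inv) := by
    rw [← cancel_mono ((ρ_ P.X).hom ⊗ₘ (ρ_ N.X).hom), Category.assoc, Category.assoc,
      ← tensor_right_unitality]
    simp [tensorHom_comp_tensorHom]
  slice_rhs 2 3 => rw [h]
  simp only [Iso.inv_hom_id_assoc, tensorHom_comp_tensorHom_assoc, tensorHom_comp_tensorHom, Category.assoc,
    MonObj.mul_one, Iso.inv_hom_id, Category.comp_id, id_tensorHom]
  simp

end Statement13Aux

open Statement13Aux in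
/-- If `ρ : 𝟙 ⟶ F ⊗ F` is a normalized Drinfel'd twist on a bialgebra
`F` in a braided monoidal category, then the `ρ`-twisted comultiplication
`Δ_ρ := (m ⊗ m) ∘ (id ⊗ c ⊗ id) ∘ (Δ ⊗ ρ)` is coassociative with counit `ε`. -/
theorem statement13 {C : Type*} [Category C] [MonoidalCategory C] [BraidedCategory C]
    (F : C) (m : F ⊗ F ⟶ F) (η : 𝟙_ C ⟶ F) (Δ : F ⟶ F ⊗ F) (ε : F ⟶ 𝟙_ C)
    (hF : IsBialgebraIn F m η Δ ε)
    (ρ : 𝟙_ C ⟶ F ⊗ F) :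
    ∀ Δρ : F ⟶ F ⊗ F,
      Δρ = (ρ_ F).inv ≫ (Δ ⊗ₘ ρ) ≫ exch F F F F ≫ (m ⊗ₘ m) →
      -- ρ is a normalized Drinfel'd twist
      (ρ ≫ (Δρ ▷ F) = ρ ≫ (F ◁ Δρ) ≫ (α_ F F F).inv) →
      (ρ ≫ (ε ▷ F) ≫ (λ_ F).hom = η) →
      (ρ ≫ (F ◁ ε) ≫ (ρ_ F).hom = η) →
      -- conclusion: Δ_ρ is coassociative and counital
      (Δρ ≫ (Δρ ▷ F) = Δρ ≫ (F ◁ Δρ) ≫ (α_ F F F).inv ∧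
       Δρ ≫ (ε ▷ F) ≫ (λ_ F).hom = 𝟙 F ∧
       Δρ ≫ (F ◁ ε) ≫ (ρ_ F).hom = 𝟙 F) := by
  
  obtain ⟨h1, h2, h3, h4, h5, h6, h7, h8, h9, h10⟩ := hF
  intro Δρ hΔρ htw hεl hεr
  -- `F` as a monoid object
  letI inst : MonObj F :=
    { one := η, mul := m,
      one_mul := by rw [← cancel_epi (λ_ F).inv, h2, Iso.inv_hom_id],
      mul_one := by rw [← cancel_epi (ρ_ F).inv, h3, Iso.inv_hom_id],
      mul_assoc := h1 }
  let M : Mon C := ⟨F⟩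
  -- `Δ` and `ε` as monoid morphisms (this is the bialgebra compatibility)
  let DH : M ⟶ M ⊗ M := Mon.Hom.mk' Δ h9 h7
  let EH : M ⟶ 𝟙_ (Mon C) := Mon.Hom.mk' ε h10 h8
  -- `Δρ` is `Δ` followed by right multiplication by `ρ`
  have hR : Δρ = Δ ≫ rmul (M ⊗ M) ρ := by
    rw [hΔρ, MonoidalCategory.tensorHom_def]
    slice_lhs 1 2 => rw [← rightUnitor_inv_naturality]
    simp only [rmul, Mon.tensorObj_mul, Category.assoc]
    rfl
  have hmulone : rmul M η = 𝟙 F := h3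
  -- the counit claims
  have counit : ∀ φ : M ⊗ M ⟶ M, ρ ≫ φ.hom = η → Δ ≫ φ.hom = 𝟙 F → Δρ ≫ φ.hom = 𝟙 F := by
    intro φ hρφ hΔφ
    rw [hR, Category.assoc, rmul_hom, hρφ, ← Category.assoc, hΔφ, Category.id_comp, hmulone]
  have hφ1 : ((EH ▷ M) ≫ (λ_ M).hom).hom = (ε ▷ F) ≫ (λ_ F).hom := by
    rw [Mon.comp_hom', Mon.whiskerLeft_hom, Mon.leftUnitor_hom_hom]
  have hφ2 : ((M ◁ EH) ≫ (ρ_ M).hom).hom = (F ◁ ε) ≫ (ρ_ F).hom := by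
    rw [Mon.comp_hom', Mon.whiskerRight_hom, Mon.rightUnitor_hom_hom]
  refine ⟨?_, ?_, ?_⟩
  · -- coassociativity
    have e1 : rmul (M ⊗ M) ρ ▷ F = rmul ((M ⊗ M) ⊗ M) ((λ_ (𝟙_ C)).inv ≫ (ρ ⊗ₘ η)) :=
      rmul_whiskerRight (M ⊗ M) M ρ
    have e2 : F ◁ rmul (M ⊗ M) ρ = rmul (M ⊗ (M ⊗ M)) ((λ_ (𝟙_ C)).inv ≫ (η ⊗ₘ ρ)) :=
      rmul_whiskerLeft M (M ⊗ M) ρ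
    have hDH : rmul (M ⊗ M) ρ ≫ (Δ ▷ F) =
        (Δ ▷ F) ≫ rmul ((M ⊗ M) ⊗ M) (ρ ≫ Δ ▷ F) := by
      have h := rmul_hom (DH ▷ M) ρ
      rw [Mon.whiskerLeft_hom] at h
      exact h
    have hDH' : rmul (M ⊗ M) ρ ≫ (F ◁ Δ) =
        (F ◁ Δ) ≫ rmul (M ⊗ (M ⊗ M)) (ρ ≫ F ◁ Δ) := by
      have h := rmul_hom (M ◁ DH) ρ
      rw [Mon.whiskerRight_hom] at h
      exact h
    have hA : ∀ x : 𝟙_ C ⟶ F ⊗ (F ⊗ F), rmul (M ⊗ (M ⊗ M)) x ≫ (α_ F F F).inv =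
        (α_ F F F).inv ≫ rmul ((M ⊗ M) ⊗ M) (x ≫ (α_ F F F).inv) :=
      fun x => rmul_hom (α_ M M M).inv x
    have hx : (ρ ≫ Δ ▷ F) ≫ rmul ((M ⊗ M) ⊗ M) ((λ_ (𝟙_ C)).inv ≫ (ρ ⊗ₘ η)) =
        ρ ≫ Δρ ▷ F := by
      rw [Category.assoc, ← e1, hR, comp_whiskerRight]
    have hx' : (ρ ≫ F ◁ Δ) ≫ rmul (M ⊗ (M ⊗ M)) ((λ_ (𝟙_ C)).inv ≫ (η ⊗ₘ ρ)) =
        ρ ≫ F ◁ Δρ := by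
      rw [Category.assoc, ← e2, hR, MonoidalCategory.whiskerLeft_comp]
    have hL : Δρ ≫ (Δρ ▷ F) =
        Δ ≫ (Δ ▷ F) ≫ rmul ((M ⊗ M) ⊗ M) (ρ ≫ Δρ ▷ F) := by
      conv_lhs => rw [hR, comp_whiskerRight]
      simp only [Category.assoc]
      rw [e1, ← Category.assoc (rmul (M ⊗ M) ρ), hDH]
      simp only [Category.assoc]
      rw [rmul_rmul, hx]
    have hRt : Δρ ≫ (F ◁ Δρ) ≫ (α_ F F F).inv =
        Δ ≫ (F ◁ Δ) ≫ (α_ F F F).inv ≫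
          rmul ((M ⊗ M) ⊗ M) ((ρ ≫ F ◁ Δρ) ≫ (α_ F F F).inv) := by
      conv_lhs => rw [hR, MonoidalCategory.whiskerLeft_comp]
      simp only [Category.assoc]
      rw [e2, ← Category.assoc (rmul (M ⊗ M) ρ), hDH']
      simp only [Category.assoc]
      rw [← Category.assoc (rmul (M ⊗ (M ⊗ M)) (ρ ≫ F ◁ Δ)), rmul_rmul, hx', hA]
      simp only [Category.assoc]
    rw [hL, hRt, htw, reassoc_of% h4]
    simp only [Category.assoc]
  · -- left counit
    have := counit ((EH ▷ M) ≫ (λ_ M).hom) (by rw [hφ1]; exact hεl) (by rw [hφ1]; exact h5)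
    rw [hφ1] at this
    simpa using this
  · -- right counit
    have := counit ((M ◁ EH) ≫ (ρ_ M).hom) (by rw [hφ2]; exact hεr) (by rw [hφ2]; exact h6)
    rw [hφ2] at this
    simpa using this
end

section
/- Let C be a monoidal category, B an object with a bimonad datum (monoid (m,η), comonoid (Δ,ε), ε∘m = ε⊗ε, Δ∘η = η⊗η, ε∘η = id_𝟙), F an object and ψ : B⊗F → F⊗B a morphism with ψ∘(η⊗id_F) = id_F⊗η. Let μ_M : F⊗F → F⊗B, and suppose Δ_M : F → F⊗F⊗B and λ_M : F⊗F → F⊗F⊗B are canonical: Δ_M = Δ̃⊗η and λ_M = λ̃⊗η, where Δ̃ : F → F⊗F satisfies (id_F⊗ε̃)∘Δ̃ = id_F for some ε̃ : F → 𝟙. If the Δ_M–μ_M bimonad compatibility holds: (id_{F⊗F}⊗m)∘(Δ_M⊗id_B)∘μ_M = (id_{F⊗F}⊗m)∘(id_{F⊗F}⊗m⊗id_B)∘(id_F⊗μ_M⊗id_{B⊗B})∘(id_{F⊗F}⊗ψ⊗id_B)∘(λ_M⊗id_F⊗id_B)∘(id_F⊗Δ_M), then μ_M is determined by μ_M = (id_F⊗σ)∘(λ̃⊗id_F)∘(id_F⊗Δ̃),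 where σ := (ε̃⊗id_B)∘μ_M : F⊗F → B. -/
open CategoryTheory MonoidalCategory

set_option maxHeartbeats 1600000 in
set_option maxRecDepth 8000 in
/-- In a biwreath in which `Δ_M` and `λ_M` are canonical, the
`Δ_M`–`μ_M` bimonad compatibility determines `μ_M`:
`μ_M = (id_F ⊗ σ) ∘ (λ̃ ⊗ id_F) ∘ (id_F ⊗ Δ̃)` with `σ := (ε̃ ⊗ id_B) ∘ μ_M`. -/
theorem statement15 {C : Type*} [Category C] [MonoidalCategory C]
    (B F : C) (m : B ⊗ B ⟶ B) (η : 𝟙_ C ⟶ B) (Δ : B ⟶ B ⊗ B) (ε : B ⟶ 𝟙_ C)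
    (hB : BimonadDatum B m η Δ ε)
    (ψ : B ⊗ F ⟶ F ⊗ B)
    (hψη : (η ▷ F) ≫ ψ = (λ_ F).hom ≫ (ρ_ F).inv ≫ (F ◁ η))
    (μM : F ⊗ F ⟶ F ⊗ B)
    (ΔM : F ⟶ (F ⊗ F) ⊗ B) (lM : F ⊗ F ⟶ (F ⊗ F) ⊗ B)
    (Δt : F ⟶ F ⊗ F) (lt : F ⊗ F ⟶ F ⊗ F) (εt : F ⟶ 𝟙_ C)
    -- Δ̃ is counital via ε̃
    (hcount : Δt ≫ (F ◁ εt) ≫ (ρ_ F).hom = 𝟙 F)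
    -- canonicity of Δ_M and λ_M
    (hΔM : ΔM = Δt ≫ (ρ_ (F ⊗ F)).inv ≫ ((F ⊗ F) ◁ η))
    (hlM : lM = lt ≫ (ρ_ (F ⊗ F)).inv ≫ ((F ⊗ F) ◁ η))
    -- the Δ_M–μ_M bimonad compatibility
    (hE8 : μM ≫ (ΔM ▷ B) ≫ (α_ (F ⊗ F) B B).hom ≫ ((F ⊗ F) ◁ m) =
      (F ◁ ΔM) ≫ (α_ F (F ⊗ F) B).inv ≫ ((α_ F F F).inv ▷ B) ≫
        ((lM ▷ F) ▷ B) ≫ ((α_ (F ⊗ F) B F).hom ▷ B) ≫ (((F ⊗ F) ◁ ψ) ▷ B) ≫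
        ((α_ F F (F ⊗ B)).hom ▷ B) ≫ ((F ◁ (α_ F F B).inv) ▷ B) ≫
        ((F ◁ (μM ▷ B)) ▷ B) ≫ ((F ◁ (α_ F B B).hom) ▷ B) ≫ ((F ◁ (F ◁ m)) ▷ B) ≫
        (α_ F (F ⊗ B) B).hom ≫ (F ◁ (α_ F B B).hom) ≫ (F ◁ (F ◁ m)) ≫
        (α_ F F B).inv) :
    ∀ σ : F ⊗ F ⟶ B, σ = μM ≫ (εt ▷ B) ≫ (λ_ B).hom →
      μM = (F ◁ Δt) ≫ (α_ F F F).inv ≫ (lt ▷ F) ≫ (α_ F F F).hom ≫ (F ◁ σ) := by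
  intro σ hσ
  obtain ⟨_, hul, hur, _, _, _, _, _, _⟩ := hB
  have hm1 : (η ▷ B) ≫ m = (λ_ B).hom := by
    have := (λ_ B).hom ≫= hul; simpa using this
  have hm2 : (B ◁ η) ≫ m = (ρ_ B).hom := by
    have := (ρ_ B).hom ≫= hur; simpa using this
  rw [hΔM, hlM] at hE8
  simp only [comp_whiskerRight, MonoidalCategory.whiskerLeft_comp, Category.assoc] at hE8
  have L1 : ∀ {Z : C} (h : F ⊗ (F ⊗ B) ⟶ Z),
      F ◁ F ◁ η ▷ B ≫ F ◁ F ◁ m ≫ h = F ◁ F ◁ (λ_ B).hom ≫ h := by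
    intro Z h
    rw [← MonoidalCategory.whiskerLeft_comp_assoc, ← MonoidalCategory.whiskerLeft_comp, hm1]
  have R1 : ∀ {Z : C} (h : F ⊗ (F ⊗ ((F ⊗ B) ⊗ B)) ⟶ Z),
      F ◁ F ◁ η ▷ F ▷ B ≫ F ◁ F ◁ ψ ▷ B ≫ h =
      F ◁ F ◁ (((λ_ F).hom ≫ (ρ_ F).inv ≫ F ◁ η) ▷ B) ≫ h := by
    intro Z h
    rw [← MonoidalCategory.whiskerLeft_comp_assoc, ← MonoidalCategory.whiskerLeft_comp,
      ← comp_whiskerRight, hψη]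
  have R2 : ∀ (u : 𝟙_ C ⊗ B ⟶ B ⊗ B) {Z : C} (h : F ⊗ (((F ⊗ B) ⊗ B) ⊗ B) ⟶ Z),
      F ◁ F ◁ F ◁ u ≫ F ◁ F ◁ (α_ F B B).inv ≫ F ◁ (α_ F (F ⊗ B) B).inv ≫
        F ◁ (α_ F F B).inv ▷ B ≫ F ◁ μM ▷ B ▷ B ≫ h =
      F ◁ (α_ F F (𝟙_ C ⊗ B)).inv ≫ F ◁ μM ▷ (𝟙_ C ⊗ B) ≫ F ◁ (F ⊗ B) ◁ u ≫
        F ◁ (α_ (F ⊗ B) B B).inv ≫ h := by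
    intro u Z h
    simp only [← MonoidalCategory.whiskerLeft_comp_assoc]
    congr 1
    rw [← whisker_exchange_assoc]
    monoidal
  have hY : B ◁ (λ_ B).inv ≫ B ◁ η ▷ B ≫ (α_ B B B).inv ≫ m ▷ B = 𝟙 (B ⊗ B) := by
    rw [associator_inv_naturality_middle_assoc, ← comp_whiskerRight, hm2]
    monoidal
  have e3 : F ◁ F ◁ B ◁ (λ_ B).inv ≫ F ◁ F ◁ B ◁ η ▷ B ≫ F ◁ (α_ F B (B ⊗ B)).inv ≫
      F ◁ (α_ (F ⊗ B) B B).inv ≫ F ◁ (α_ F B B).hom ▷ B ≫ F ◁ (α_ F (B ⊗ B) B).hom ≫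
      F ◁ F ◁ m ▷ B = 𝟙 (F ⊗ (F ⊗ (B ⊗ B))) := by
    calc F ◁ F ◁ B ◁ (λ_ B).inv ≫ F ◁ F ◁ B ◁ η ▷ B ≫ F ◁ (α_ F B (B ⊗ B)).inv ≫
        F ◁ (α_ (F ⊗ B) B B).inv ≫ F ◁ (α_ F B B).hom ▷ B ≫ F ◁ (α_ F (B ⊗ B) B).hom ≫
        F ◁ F ◁ m ▷ B
        = F ◁ (F ◁ (B ◁ (λ_ B).inv ≫ B ◁ η ▷ B ≫ (α_ B B B).inv ≫ m ▷ B)) := by monoidal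
      _ = 𝟙 (F ⊗ (F ⊗ (B ⊗ B))) := by rw [hY]; simp
  simp [whisker_exchange, hm1, hm2, hψη, L1, R1, R2, reassoc_of% e3] at hE8
  have keyL : μM ≫ Δt ▷ B ≫ (α_ F F B).hom ≫ F ◁ F ◁ (λ_ B).inv ≫ F ◁ F ◁ (λ_ B).hom ≫
      (α_ F F B).inv = μM ≫ Δt ▷ B := by monoidal
  have keyR : F ◁ Δt ≫
      (ρ_ (F ⊗ F ⊗ F)).inv ≫
        (α_ F (F ⊗ F) (𝟙_ C)).hom ≫
          F ◁ (α_ F F (𝟙_ C)).hom ≫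
            F ◁ F ◁ F ◁ η ≫
              (α_ F F (F ⊗ B)).inv ≫
                (α_ (F ⊗ F) F B).inv ≫
                  lt ▷ F ▷ B ≫
                    (ρ_ (F ⊗ F)).inv ▷ F ▷ B ≫
                      (α_ (F ⊗ F) (𝟙_ C) F).hom ▷ B ≫
                        (α_ (F ⊗ F) (𝟙_ C ⊗ F) B).hom ≫
                          (α_ F F ((𝟙_ C ⊗ F) ⊗ B)).hom ≫
                            F ◁ F ◁ (α_ (𝟙_ C) F B).hom ≫
                              F ◁ F ◁ (λ_ (F ⊗ B)).hom ≫
                                F ◁ F ◁ F ◁ (λ_ B).inv ≫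
                                  F ◁ F ◁ F ◁ (λ_ B).hom ≫
                                    F ◁ (α_ F F B).inv ≫
                                      F ◁ μM ▷ B ≫ F ◁ (α_ F B B).hom ≫ F ◁ F ◁ m ≫ (α_ F F B).inv =
      F ◁ Δt ≫ (α_ F F F).inv ≫ lt ▷ F ≫ (α_ F F F).hom ≫ F ◁ μM ≫ (α_ F F B).inv := by
    calc _ = F ◁ Δt ≫ (ρ_ (F ⊗ (F ⊗ F))).inv ≫ (F ⊗ (F ⊗ F)) ◁ η ≫
        ((α_ F F F).inv ≫ lt ▷ F ≫ (α_ F F F).hom ≫ F ◁ μM ≫ (α_ F F B).inv) ▷ B ≫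
        (α_ (F ⊗ F) B B).hom ≫ (F ⊗ F) ◁ m := by monoidal
      _ = F ◁ Δt ≫ (ρ_ (F ⊗ (F ⊗ F))).inv ≫
        ((α_ F F F).inv ≫ lt ▷ F ≫ (α_ F F F).hom ≫ F ◁ μM ≫ (α_ F F B).inv) ▷ 𝟙_ C ≫
        ((F ⊗ F) ⊗ B) ◁ η ≫ (α_ (F ⊗ F) B B).hom ≫ (F ⊗ F) ◁ m := by
          rw [whisker_exchange_assoc]
      _ = F ◁ Δt ≫ (α_ F F F).inv ≫ lt ▷ F ≫ (α_ F F F).hom ≫ F ◁ μM ≫ (α_ F F B).inv ≫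
        (ρ_ ((F ⊗ F) ⊗ B)).inv ≫ ((F ⊗ F) ⊗ B) ◁ η ≫ (α_ (F ⊗ F) B B).hom ≫
        (F ⊗ F) ◁ m := by monoidal
      _ = F ◁ Δt ≫ (α_ F F F).inv ≫ lt ▷ F ≫ (α_ F F F).hom ≫ F ◁ μM ≫ (α_ F F B).inv ≫
        (ρ_ ((F ⊗ F) ⊗ B)).inv ≫ (α_ (F ⊗ F) B (𝟙_ C)).hom ≫ (F ⊗ F) ◁ (B ◁ η) ≫
        (F ⊗ F) ◁ m := by rw [associator_naturality_right_assoc]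
      _ = F ◁ Δt ≫ (α_ F F F).inv ≫ lt ▷ F ≫ (α_ F F F).hom ≫ F ◁ μM ≫ (α_ F F B).inv ≫
        (ρ_ ((F ⊗ F) ⊗ B)).inv ≫ (α_ (F ⊗ F) B (𝟙_ C)).hom ≫ (F ⊗ F) ◁ (ρ_ B).hom := by
          rw [← MonoidalCategory.whiskerLeft_comp, hm2]
      _ = F ◁ Δt ≫ (α_ F F F).inv ≫ lt ▷ F ≫ (α_ F F F).hom ≫ F ◁ μM ≫ (α_ F F B).inv := by
          monoidal
  replace hE8 := hE8.trans (Eq.trans (by monoidal) keyR)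
  subst hσ
  have h2 := hE8 =≫ (((F ◁ εt) ▷ B) ≫ ((ρ_ F).hom ▷ B))
  simp only [Category.assoc] at h2
  have hL2 : Δt ▷ B ≫ (F ◁ εt) ▷ B ≫ (ρ_ F).hom ▷ B = 𝟙 (F ⊗ B) := by
    rw [← comp_whiskerRight_assoc, ← comp_whiskerRight, Category.assoc, hcount]
    simp
  have hR2 : (α_ F F B).inv ≫ (F ◁ εt) ▷ B ≫ (ρ_ F).hom ▷ B =
      F ◁ εt ▷ B ≫ F ◁ (λ_ B).hom := by monoidal
  rw [hL2, hR2] at h2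
  simp only [Category.comp_id] at h2
  simp only [MonoidalCategory.whiskerLeft_comp, Category.assoc]
  exact h2
end

section
/- Let C be a monoidal category, B an object with a bimonad datum (monoid (m,η), comonoid (Δ,ε), ε∘m = ε⊗ε, Δ∘η = η⊗η, ε∘η = id_𝟙), F an object and ψ : B⊗F → F⊗B a morphism with ψ∘(η⊗id_F) = id_F⊗η. Let Δ_M : F → F⊗F⊗B, and suppose μ_M : F⊗F → F⊗B and λ_M : F⊗F → F⊗F⊗B are canonical: μ_M = μ̃⊗η and λ_M = λ̃⊗η, where μ̃ : F⊗F → F satisfies μ̃∘(id_F⊗η̃) = id_F for some η̃ : 𝟙 → F. If the Δ_M–μ_M bimonad compatibility holds: (id_{F⊗F}⊗m)∘(Δ_M⊗id_B)∘μ_M = (id_{F⊗F}⊗m)∘(id_{F⊗F}⊗m⊗id_B)∘(id_F⊗μ_M⊗id_{B⊗B})∘(id_{F⊗F}⊗ψ⊗id_B)∘(λ_M⊗id_F⊗id_B)∘(id_F⊗Δ_M), then Δ_M is determined by Δ_M = (id_F⊗μ̃⊗id_B)∘(λ̃⊗id_F⊗id_B)∘(id_F⊗Φ_λ), where Φ_λ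 := Δ_M∘η̃ : 𝟙 → F⊗F⊗B. -/
open CategoryTheory MonoidalCategory

private theorem core16 {C : Type*} [Category C] [MonoidalCategory C]
    (B F : C) (m : B ⊗ B ⟶ B) (η : 𝟙_ C ⟶ B)
    (hlu : (λ_ B).inv ≫ (η ▷ B) ≫ m = 𝟙 B)
    (hru : (ρ_ B).inv ≫ (B ◁ η) ≫ m = 𝟙 B)
    (ψ : B ⊗ F ⟶ F ⊗ B)
    (hψη : (η ▷ F) ≫ ψ = (λ_ F).hom ≫ (ρ_ F).inv ≫ (F ◁ η))
    (ΔM : F ⟶ (F ⊗ F) ⊗ B)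
    (μt : F ⊗ F ⟶ F) (lt : F ⊗ F ⟶ F ⊗ F) (ηt : 𝟙_ C ⟶ F)
    (hunit : (ρ_ F).inv ≫ (F ◁ ηt) ≫ μt = 𝟙 F)
    (hE8 : (μt ≫ (ρ_ F).inv ≫ (F ◁ η)) ≫ (ΔM ▷ B) ≫ (α_ (F ⊗ F) B B).hom ≫ ((F ⊗ F) ◁ m) =
      (F ◁ ΔM) ≫ (α_ F (F ⊗ F) B).inv ≫ ((α_ F F F).inv ▷ B) ≫
        (((lt ≫ (ρ_ (F ⊗ F)).inv ≫ ((F ⊗ F) ◁ η)) ▷ F) ▷ B) ≫ ((α_ (F ⊗ F) B F).hom ▷ B) ≫ (((F ⊗ F) ◁ ψ) ▷ B) ≫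
        ((α_ F F (F ⊗ B)).hom ▷ B) ≫ ((F ◁ (α_ F F B).inv) ▷ B) ≫
        ((F ◁ ((μt ≫ (ρ_ F).inv ≫ (F ◁ η)) ▷ B)) ▷ B) ≫ ((F ◁ (α_ F B B).hom) ▷ B) ≫ ((F ◁ (F ◁ m)) ▷ B) ≫
        (α_ F (F ⊗ B) B).hom ≫ (F ◁ (α_ F B B).hom) ≫ (F ◁ (F ◁ m)) ≫
        (α_ F F B).inv) :
      ΔM = (ρ_ F).inv ≫ (F ◁ (ηt ≫ ΔM)) ≫ (α_ F (F ⊗ F) B).inv ≫ ((α_ F F F).inv ▷ B) ≫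
        ((lt ▷ F) ▷ B) ≫ ((α_ F F F).hom ▷ B) ≫ ((F ◁ μt) ▷ B) := by
  have hη2 : (η ▷ B) ≫ m = (λ_ B).hom := by
    simpa using congrArg (fun g => (λ_ B).hom ≫ g) hlu
  -- unit-cancellation: η inserted on the right of the B-strand dies against m
  have key : ∀ (Y : C), (ρ_ (Y ⊗ B)).inv ≫ ((Y ⊗ B) ◁ η) ≫ (α_ Y B B).hom ≫ (Y ◁ m) = 𝟙 (Y ⊗ B) := by
    intro Y
    have h1 : (ρ_ (Y ⊗ B)).inv ≫ ((Y ⊗ B) ◁ η) ≫ (α_ Y B B).hom = Y ◁ ((ρ_ B).inv ≫ (B ◁ η)) := by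
      rw [MonoidalCategory.whiskerLeft_comp]; monoidal
    rw [reassoc_of% h1, ← MonoidalCategory.whiskerLeft_comp]
    simp only [Category.assoc, hru, MonoidalCategory.whiskerLeft_id]
  -- η inserted on the left of the B-strand dies against m
  have key2 : (((ρ_ F).inv ≫ (F ◁ η)) ▷ B) ≫ (α_ F B B).hom ≫ (F ◁ m) = 𝟙 (F ⊗ B) := by
    rw [comp_whiskerRight, Category.assoc, associator_naturality_middle_assoc,
      ← MonoidalCategory.whiskerLeft_comp, hη2]
    monoidal
  -- the inner reduction
  have s3' : (F ◁ ((ρ_ F).inv ≫ (F ◁ η))) ≫ (α_ F F B).inv ≫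
      ((μt ≫ (ρ_ F).inv ≫ (F ◁ η)) ▷ B) ≫ (α_ F B B).hom ≫ (F ◁ m) =
      μt ≫ (ρ_ F).inv ≫ (F ◁ η) := by
    rw [MonoidalCategory.whiskerLeft_comp, Category.assoc,
      associator_inv_naturality_right_assoc]
    have c2 : (F ◁ (ρ_ F).inv) ≫ (α_ F F (𝟙_ C)).inv = (ρ_ (F ⊗ F)).inv := by monoidal
    rw [reassoc_of% c2, whisker_exchange_assoc, ← rightUnitor_inv_naturality_assoc,
      key F, Category.comp_id]
  -- the "P" part: everything under ▷ B collapses to α ≫ F ◁ μM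
  have hP : ((ρ_ (F ⊗ F)).inv ▷ F) ≫ (((F ⊗ F) ◁ η) ▷ F) ≫ (α_ (F ⊗ F) B F).hom ≫
      ((F ⊗ F) ◁ ψ) ≫ (α_ F F (F ⊗ B)).hom ≫ (F ◁ (α_ F F B).inv) ≫
      (F ◁ ((μt ≫ (ρ_ F).inv ≫ (F ◁ η)) ▷ B)) ≫ (F ◁ (α_ F B B).hom) ≫ (F ◁ (F ◁ m)) =
      (α_ F F F).hom ≫ (F ◁ (μt ≫ (ρ_ F).inv ≫ (F ◁ η))) := by
    rw [associator_naturality_middle_assoc, ← MonoidalCategory.whiskerLeft_comp_assoc, hψη]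
    simp only [MonoidalCategory.whiskerLeft_comp, Category.assoc]
    have c1 : ((ρ_ (F ⊗ F)).inv ▷ F) ≫ (α_ (F ⊗ F) (𝟙_ C) F).hom ≫ ((F ⊗ F) ◁ (λ_ F).hom) =
        𝟙 ((F ⊗ F) ⊗ F) := by monoidal
    rw [reassoc_of% c1, ← MonoidalCategory.whiskerLeft_comp_assoc,
      associator_naturality_right_assoc]
    simp only [← MonoidalCategory.whiskerLeft_comp, Category.assoc]
    rw [s3']
  -- tail cancellation
  have hQ : ((F ◁ ((ρ_ F).inv ≫ (F ◁ η))) ▷ B) ≫ (α_ F (F ⊗ B) B).hom ≫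
      (F ◁ (α_ F B B).hom) ≫ (F ◁ (F ◁ m)) ≫ (α_ F F B).inv = 𝟙 ((F ⊗ F) ⊗ B) := by
    rw [associator_naturality_middle_assoc]
    simp only [← MonoidalCategory.whiskerLeft_comp_assoc, Category.assoc]
    rw [key2]
    simp
  -- precompose hE8 with (ρ_F).inv ≫ (F ◁ ηt)
  have h := congrArg (fun g => (ρ_ F).inv ≫ (F ◁ ηt) ≫ g) hE8
  simp only [Category.assoc] at h
  rw [reassoc_of% hunit, whisker_exchange_assoc, ← rightUnitor_inv_naturality_assoc,
    key (F ⊗ F), Category.comp_id] at h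
  -- flatten everything
  have hP' := congrArg (fun g => g ▷ B) hP
  simp only [comp_whiskerRight, MonoidalCategory.whiskerLeft_comp, Category.assoc] at hP' hQ h ⊢
  rw [reassoc_of% hP', hQ, Category.comp_id] at h
  exact h

/-- In a biwreath in which `μ_M` and `λ_M` are canonical, the
`Δ_M`–`μ_M` bimonad compatibility determines `Δ_M`:
`Δ_M = (id_F ⊗ μ̃ ⊗ id_B) ∘ (λ̃ ⊗ id_F ⊗ id_B) ∘ (id_F ⊗ Φ_λ)` with
`Φ_λ := Δ_M ∘ η̃`. -/
theorem statement16 {C : Type*} [Category C] [MonoidalCategory C]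
    (B F : C) (m : B ⊗ B ⟶ B) (η : 𝟙_ C ⟶ B) (Δ : B ⟶ B ⊗ B) (ε : B ⟶ 𝟙_ C)
    (hB : BimonadDatum B m η Δ ε)
    (ψ : B ⊗ F ⟶ F ⊗ B)
    (hψη : (η ▷ F) ≫ ψ = (λ_ F).hom ≫ (ρ_ F).inv ≫ (F ◁ η))
    (ΔM : F ⟶ (F ⊗ F) ⊗ B)
    (μM : F ⊗ F ⟶ F ⊗ B) (lM : F ⊗ F ⟶ (F ⊗ F) ⊗ B)
    (μt : F ⊗ F ⟶ F) (lt : F ⊗ F ⟶ F ⊗ F) (ηt : 𝟙_ C ⟶ F)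
    -- μ̃ is unital via η̃
    (hunit : (ρ_ F).inv ≫ (F ◁ ηt) ≫ μt = 𝟙 F)
    -- canonicity of μ_M and λ_M
    (hμM : μM = μt ≫ (ρ_ F).inv ≫ (F ◁ η))
    (hlM : lM = lt ≫ (ρ_ (F ⊗ F)).inv ≫ ((F ⊗ F) ◁ η))
    -- the Δ_M–μ_M bimonad compatibility
    (hE8 : μM ≫ (ΔM ▷ B) ≫ (α_ (F ⊗ F) B B).hom ≫ ((F ⊗ F) ◁ m) =
      (F ◁ ΔM) ≫ (α_ F (F ⊗ F) B).inv ≫ ((α_ F F F).inv ▷ B) ≫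
        ((lM ▷ F) ▷ B) ≫ ((α_ (F ⊗ F) B F).hom ▷ B) ≫ (((F ⊗ F) ◁ ψ) ▷ B) ≫
        ((α_ F F (F ⊗ B)).hom ▷ B) ≫ ((F ◁ (α_ F F B).inv) ▷ B) ≫
        ((F ◁ (μM ▷ B)) ▷ B) ≫ ((F ◁ (α_ F B B).hom) ▷ B) ≫ ((F ◁ (F ◁ m)) ▷ B) ≫
        (α_ F (F ⊗ B) B).hom ≫ (F ◁ (α_ F B B).hom) ≫ (F ◁ (F ◁ m)) ≫
        (α_ F F B).inv) :
    ∀ Φ : 𝟙_ C ⟶ (F ⊗ F) ⊗ B, Φ = ηt ≫ ΔM →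
      ΔM = (ρ_ F).inv ≫ (F ◁ Φ) ≫ (α_ F (F ⊗ F) B).inv ≫ ((α_ F F F).inv ▷ B) ≫
        ((lt ▷ F) ▷ B) ≫ ((α_ F F F).hom ▷ B) ≫ ((F ◁ μt) ▷ B) := by
  intro Φ hΦ
  subst hμM; subst hlM; subst hΦ
  exact core16 B F m η hB.2.1 hB.2.2.1 ψ hψη ΔM μt lt ηt hunit hE8
end

section
/- Let C be a monoidal category, B an object with a bimonad datum (monoid (m,η), comonoid (Δ,ε), ε∘m = ε⊗ε, Δ∘η = η⊗η, ε∘η = id_𝟙), and F an object equipped with morphisms μ_M : F⊗F → F⊗B, Δ_C : F⊗B → F⊗F, λ : F⊗F → F⊗F, μ̃ := (id_F⊗ε)∘μ_M : F⊗F → F, Δ̃ := Δ_C∘(id_F⊗η) : F → F⊗F, η̃ : 𝟙 → F and ε̃ : F → 𝟙, such that μ̃∘(id_F⊗η̃) = id_F, (id_F⊗ε̃)∘Δ̃ = id_F, and the two compatibility conditions of a biwreath-like object hold: (Δ̃⊗id_B)∘μ_M = (id_F⊗μ_M)∘(λ⊗id_F)∘(id_F⊗Δ̃) and Δ_C∘(μ̃⊗id_B)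 = (id_F⊗μ̃)∘(λ⊗id_F)∘(id_F⊗Δ_C). Then: (i) Δ̃∘μ̃ = (id_F⊗μ̃)∘(λ⊗id_F)∘(id_F⊗Δ̃) (so F carries the bimonad compatibility of a λ-twisted bialgebra in C); (ii) μ_M is the σ-twisted multiplication: μ_M = (id_F⊗σ)∘(λ⊗id_F)∘(id_F⊗Δ̃) with σ := (ε̃⊗id_B)∘μ_M; (iii) Δ_C is the ρ-twisted comultiplication: Δ_C = (id_F⊗μ̃)∘(λ⊗id_F)∘(id_F⊗ρ) with ρ := Δ_C∘(η̃⊗id_B). -/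
open CategoryTheory MonoidalCategory

/-- In a biwreath-like object, the two compatibility conditions
relating `λ` with `μ_M` and `Δ_C` imply: (i) the `λ`-twisted bialgebra compatibility
for the canonical restrictions `μ̃`, `Δ̃`; (ii) `μ_M` is the `σ`-twisted multiplication;
(iii) `Δ_C` is the `ρ`-twisted comultiplication. -/
theorem statement17 {C : Type*} [Category C] [MonoidalCategory C]
    (B F : C) (m : B ⊗ B ⟶ B) (η : 𝟙_ C ⟶ B) (Δ : B ⟶ B ⊗ B) (ε : B ⟶ 𝟙_ C)
    (hB : BimonadDatum B m η Δ ε)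
    (μM : F ⊗ F ⟶ F ⊗ B) (ΔC : F ⊗ B ⟶ F ⊗ F) (lam : F ⊗ F ⟶ F ⊗ F)
    (μt : F ⊗ F ⟶ F) (Δt : F ⟶ F ⊗ F) (ηt : 𝟙_ C ⟶ F) (εt : F ⟶ 𝟙_ C)
    -- the canonical restrictions of μ_M and Δ_C
    (hμt : μt = μM ≫ (F ◁ ε) ≫ (ρ_ F).hom)
    (hΔt : Δt = (ρ_ F).inv ≫ (F ◁ η) ≫ ΔC)
    -- unitality and counitality
    (hunit : (ρ_ F).inv ≫ (F ◁ ηt) ≫ μt = 𝟙 F)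
    (hcount : Δt ≫ (F ◁ εt) ≫ (ρ_ F).hom = 𝟙 F)
    -- the compatibility of λ with μ_M
    (hcomp1 : μM ≫ (Δt ▷ B) =
      (F ◁ Δt) ≫ (α_ F F F).inv ≫ (lam ▷ F) ≫ (α_ F F F).hom ≫ (F ◁ μM) ≫
        (α_ F F B).inv)
    -- the compatibility of λ with Δ_C
    (hcomp2 : (μt ▷ B) ≫ ΔC =
      (α_ F F B).hom ≫ (F ◁ ΔC) ≫ (α_ F F F).inv ≫ (lam ▷ F) ≫
        (α_ F F F).hom ≫ (F ◁ μt)) :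
    -- (i) the λ-twisted bialgebra compatibility
    (μt ≫ Δt =
      (F ◁ Δt) ≫ (α_ F F F).inv ≫ (lam ▷ F) ≫ (α_ F F F).hom ≫ (F ◁ μt)) ∧
    -- (ii) μ_M is the σ-twisted multiplication
    (∀ σ : F ⊗ F ⟶ B, σ = μM ≫ (εt ▷ B) ≫ (λ_ B).hom →
      μM = (F ◁ Δt) ≫ (α_ F F F).inv ≫ (lam ▷ F) ≫ (α_ F F F).hom ≫ (F ◁ σ)) ∧
    -- (iii) Δ_C is the ρ-twisted comultiplication
    (∀ r : B ⟶ F ⊗ F, r = (λ_ B).inv ≫ (ηt ▷ B) ≫ ΔC →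
      ΔC = (F ◁ r) ≫ (α_ F F F).inv ≫ (lam ▷ F) ≫ (α_ F F F).hom ≫ (F ◁ μt)) := by
  have key1 : (ρ_ (F ⊗ F)).inv ≫ ((F ⊗ F) ◁ η) ≫ (α_ F F B).hom
      = (F ◁ (ρ_ F).inv) ≫ (F ◁ (F ◁ η)) := by
    rw [associator_naturality_right]; coherence
  have key2 : ((ρ_ F).inv ▷ B) ≫ ((F ◁ ηt) ▷ B) ≫ (α_ F F B).hom
      = (F ◁ (λ_ B).inv) ≫ (F ◁ (ηt ▷ B)) := by
    rw [associator_naturality_middle]; coherence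
  have key3 : (α_ F F B).inv ≫ ((F ◁ εt) ▷ B) ≫ ((ρ_ F).hom ▷ B)
      = (F ◁ (εt ▷ B)) ≫ (F ◁ (λ_ B).hom) := by
    rw [← associator_inv_naturality_middle_assoc]; coherence
  have hc : Δt ▷ B ≫ (F ◁ εt) ▷ B ≫ (ρ_ F).hom ▷ B = 𝟙 (F ⊗ B) := by
    simp only [← comp_whiskerRight, Category.assoc]
    rw [hcount, id_whiskerRight]
  have hu : (ρ_ F).inv ▷ B ≫ (F ◁ ηt) ▷ B ≫ μt ▷ B = 𝟙 (F ⊗ B) := by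
    simp only [← comp_whiskerRight, Category.assoc]
    rw [hunit, id_whiskerRight]
  refine ⟨?_, ?_, ?_⟩
  · -- (i)
    calc μt ≫ Δt = μt ≫ (ρ_ F).inv ≫ (F ◁ η) ≫ ΔC := by rw [hΔt]
      _ = (ρ_ (F ⊗ F)).inv ≫ ((F ⊗ F) ◁ η) ≫ (μt ▷ B) ≫ ΔC := by
            rw [rightUnitor_inv_naturality_assoc, whisker_exchange_assoc]
      _ = (ρ_ (F ⊗ F)).inv ≫ ((F ⊗ F) ◁ η) ≫ (α_ F F B).hom ≫ (F ◁ ΔC) ≫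
            (α_ F F F).inv ≫ (lam ▷ F) ≫ (α_ F F F).hom ≫ (F ◁ μt) := by
            rw [hcomp2]
      _ = (F ◁ (ρ_ F).inv) ≫ (F ◁ (F ◁ η)) ≫ (F ◁ ΔC) ≫
            (α_ F F F).inv ≫ (lam ▷ F) ≫ (α_ F F F).hom ≫ (F ◁ μt) := by
            rw [reassoc_of% key1]
      _ = (F ◁ Δt) ≫ (α_ F F F).inv ≫ (lam ▷ F) ≫ (α_ F F F).hom ≫ (F ◁ μt) := by
            rw [hΔt]; simp
  · -- (ii)
    intro σ hσ
    calc μM = μM ≫ Δt ▷ B ≫ (F ◁ εt) ▷ B ≫ (ρ_ F).hom ▷ B := by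
            rw [hc, Category.comp_id]
      _ = (F ◁ Δt) ≫ (α_ F F F).inv ≫ (lam ▷ F) ≫ (α_ F F F).hom ≫ (F ◁ μM) ≫
            (α_ F F B).inv ≫ ((F ◁ εt) ▷ B) ≫ ((ρ_ F).hom ▷ B) := by
            rw [reassoc_of% hcomp1]
      _ = (F ◁ Δt) ≫ (α_ F F F).inv ≫ (lam ▷ F) ≫ (α_ F F F).hom ≫ (F ◁ μM) ≫
            (F ◁ (εt ▷ B)) ≫ (F ◁ (λ_ B).hom) := by rw [key3]
      _ = (F ◁ Δt) ≫ (α_ F F F).inv ≫ (lam ▷ F) ≫ (α_ F F F).hom ≫ (F ◁ σ) := by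
            rw [hσ]; simp
  · -- (iii)
    intro r hr
    calc ΔC = (ρ_ F).inv ▷ B ≫ (F ◁ ηt) ▷ B ≫ μt ▷ B ≫ ΔC := by
            rw [reassoc_of% hu]
      _ = (ρ_ F).inv ▷ B ≫ (F ◁ ηt) ▷ B ≫ (α_ F F B).hom ≫ (F ◁ ΔC) ≫
            (α_ F F F).inv ≫ (lam ▷ F) ≫ (α_ F F F).hom ≫ (F ◁ μt) := by
            rw [hcomp2]
      _ = (F ◁ (λ_ B).inv) ≫ (F ◁ (ηt ▷ B)) ≫ (F ◁ ΔC) ≫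
            (α_ F F F).inv ≫ (lam ▷ F) ≫ (α_ F F F).hom ≫ (F ◁ μt) := by
            rw [reassoc_of% key2]
      _ = (F ◁ r) ≫ (α_ F F F).inv ≫ (lam ▷ F) ≫ (α_ F F F).hom ≫ (F ◁ μt) := by
            rw [hr]; simp
end
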